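/- arXiv:2509.13406 — 7 statements merged into one kernel-verified Lean document; each statement's English description precedes it below -/
import Mathlib

section
/- Let n be even and let τ ∈ S_n be a non-crossing permutation (i.e., k(τ) + k(ητ⁻¹) = n+1 for the standard n-cycle η) all of whose cycles have even length. Then k(ητ⁻¹) ≥ n/2 + 1, and ητ⁻¹ has at least one fixed point. -/
/-- The number of cycles of a permutation, counting fixed points as cycles of length 1. -/
def numCycles {n : ℕ} (σ : Equiv.Perm (Fin n)) : ℕ :=
  σ.cycleType.card + (n - σ.cycleType.sum)

/-- The standard `n`-cycle `(n, n-1, …, 1)`, i.e. `i ↦ i - 1` cyclically. -/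
def stdCycle (n : ℕ) : Equiv.Perm (Fin n) := (finRotate n)⁻¹

lemma numCycles_le_of_fixed_point_free {n : ℕ} (σ : Equiv.Perm (Fin n))
    (h : ∀ x, σ x ≠ x) : numCycles σ ≤ n / 2 := by
  have hsum : σ.cycleType.sum = σ.support.card := Equiv.Perm.sum_cycleType σ
  have hsupp : σ.support = Finset.univ := by
    ext x; simp [Equiv.Perm.mem_support, h x]
  have hsumn : σ.cycleType.sum = n := by
    rw [hsum, hsupp]; simp
  have hcard : 2 * σ.cycleType.card ≤ σ.cycleType.sum := by
    have := Multiset.card_nsmul_le_sum (s := σ.cycleType) (a := 2)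
      (fun x hx => Equiv.Perm.two_le_of_mem_cycleType hx)
    simpa [smul_eq_mul, mul_comm] using this
  unfold numCycles
  omega

/-- Let `n` be even and `τ ∈ S_n` a non-crossing permutation (i.e.
`k(τ) + k(ητ⁻¹) = n + 1` for the standard `n`-cycle `η`) all of whose cycles have
even length (in particular no fixed points). Then `k(ητ⁻¹) ≥ n/2 + 1` and `ητ⁻¹`
has at least one fixed point. -/
theorem noncrossing_even_cycles (n : ℕ) (hn : Even n) (τ : Equiv.Perm (Fin n))
    (hnc : numCycles τ + numCycles (stdCycle n * τ⁻¹) = n + 1)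
    (hfix : ∀ x, τ x ≠ x) (heven : ∀ c ∈ τ.cycleType, Even c) :
    n / 2 + 1 ≤ numCycles (stdCycle n * τ⁻¹) ∧ ∃ x, (stdCycle n * τ⁻¹) x = x := by
  obtain ⟨m, hm⟩ := hn
  have hτ : numCycles τ ≤ n / 2 := numCycles_le_of_fixed_point_free τ hfix
  have h1 : n / 2 + 1 ≤ numCycles (stdCycle n * τ⁻¹) := by omega
  refine ⟨h1, ?_⟩
  by_contra hno
  push_neg at hno
  have := numCycles_le_of_fixed_point_free _ hno
  omega
end

section
/- Let n be even and let τ ∈ S_n be a non-crossing permutation such that ητ⁻¹ has no fixed points. Then k(τ) ≥ n/2 + 1, and τ has at least one cycle of odd length. -/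
/-- Let `n` be even and `τ ∈ S_n` a non-crossing permutation (i.e.
`k(τ) + k(ητ⁻¹) = n + 1` for the standard `n`-cycle `η`) such that `ητ⁻¹` has no
fixed points. Then `k(τ) ≥ n/2 + 1`, and `τ` has at least one cycle of odd length
(fixed points counting as cycles of length 1). -/
theorem noncrossing_no_singleton (n : ℕ) (hn : Even n) (τ : Equiv.Perm (Fin n))
    (hnc : numCycles τ + numCycles (stdCycle n * τ⁻¹) = n + 1)
    (hfix : ∀ x, (stdCycle n * τ⁻¹) x ≠ x) :
    n / 2 + 1 ≤ numCycles τ ∧ ∃ c ∈ (Equiv.Perm.partition τ).parts, Odd c := by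
  set σ := stdCycle n * τ⁻¹ with hσ
  have hsupp : σ.support = Finset.univ := by
    ext x; simp [Equiv.Perm.mem_support, hfix x]
  have hsum : σ.cycleType.sum = n := by
    rw [Equiv.Perm.sum_cycleType, hsupp]; simp
  have h2 : ∀ c ∈ σ.cycleType, 2 ≤ c := fun c hc => Equiv.Perm.two_le_of_mem_cycleType hc
  have hcard : 2 * Multiset.card σ.cycleType ≤ n := by
    calc 2 * Multiset.card σ.cycleType = Multiset.card σ.cycleType • 2 := by
          rw [smul_eq_mul, mul_comm]
      _ ≤ σ.cycleType.sum := Multiset.card_nsmul_le_sum h2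
      _ = n := hsum
  have hkσ : numCycles σ ≤ n / 2 := by
    unfold numCycles; omega
  obtain ⟨m, hm⟩ := hn
  have h1 : n / 2 + 1 ≤ numCycles τ := by omega
  refine ⟨h1, ?_⟩
  by_contra h
  push_neg at h
  have h2' : ∀ c ∈ (Equiv.Perm.partition τ).parts, 2 ≤ c := by
    intro c hc
    have hodd := h c hc
    rw [Nat.not_odd_iff_even] at hodd
    obtain ⟨d, hd⟩ := hodd
    have hp := (Equiv.Perm.partition τ).parts_pos hc
    omega
  have hpsum : (Equiv.Perm.partition τ).parts.sum = n := by
    have := (Equiv.Perm.partition τ).parts_sum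
    simpa using this
  have hpcard : Multiset.card (Equiv.Perm.partition τ).parts = numCycles τ := by
    rw [Equiv.Perm.parts_partition]
    simp [numCycles, Equiv.Perm.sum_cycleType]
  have hge : 2 * Multiset.card (Equiv.Perm.partition τ).parts ≤ n := by
    calc 2 * Multiset.card (Equiv.Perm.partition τ).parts
        = Multiset.card (Equiv.Perm.partition τ).parts • 2 := by rw [smul_eq_mul, mul_comm]
      _ ≤ (Equiv.Perm.partition τ).parts.sum := Multiset.card_nsmul_le_sum h2'
      _ = n := hpsum
  omega
end

section
/- Let τ ∈ S_n be a non-crossing permutation such that ητ⁻¹ has at least one fixed point, where η is the standard n-cycle. If σ ∈ S_n lies on a Cayley geodesic between η and τ, i.e. d(η,τ) = d(η,σ) + d(σ,τ), then σ is also non-crossing and ησ⁻¹ has at least one fixed point. -/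
open Equiv Equiv.Perm

namespace NCG

variable {α : Type*} [DecidableEq α] [Fintype α]

/-- Reflection length: sum of (cycle length - 1). -/
def L (σ : Perm α) : ℕ := σ.cycleType.sum - σ.cycleType.card

lemma card_le_sum_cycleType (σ : Perm α) : σ.cycleType.card ≤ σ.cycleType.sum := by
  have := Multiset.card_nsmul_le_sum (s := σ.cycleType)
    (fun x hx => (one_le_two.trans (two_le_of_mem_cycleType hx)))
  simpa using this

lemma two_card_le_sum_cycleType (σ : Perm α) : 2 * σ.cycleType.card ≤ σ.cycleType.sum := by
  have := Multiset.card_nsmul_le_sum (s := σ.cycleType)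
    (fun x hx => two_le_of_mem_cycleType hx)
  simpa [Nat.mul_comm] using this

lemma L_one : L (1 : Perm α) = 0 := by simp [L]

lemma L_inv (σ : Perm α) : L σ⁻¹ = L σ := by simp [L, cycleType_inv]

lemma L_disjoint {σ τ : Perm α} (h : Perm.Disjoint σ τ) : L (σ * τ) = L σ + L τ := by
  have h1 := card_le_sum_cycleType σ
  have h2 := card_le_sum_cycleType τ
  simp only [L, h.cycleType_mul, Multiset.sum_add, Multiset.card_add]
  omega

lemma L_isCycle {σ : Perm α} (h : σ.IsCycle) : L σ + 1 = σ.support.card := by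
  have h2 := h.two_le_card_support
  have h3 : σ.cycleType = {σ.support.card} := by simpa using h.cycleType
  simp only [L, h3, Multiset.sum_singleton, Multiset.card_singleton]
  omega

lemma L_swap {x y : α} (h : x ≠ y) : L (Equiv.swap x y) = 1 := by
  have h1 := L_isCycle (isCycle_swap h)
  rw [support_swap h] at h1
  rw [Finset.card_insert_of_notMem (by simpa using h), Finset.card_singleton] at h1
  omega

lemma L_pos {σ : Perm α} (h : σ ≠ 1) : 1 ≤ L σ := by
  have h1 := two_card_le_sum_cycleType σ
  have h2 : σ.cycleType ≠ 0 := by simpa [cycleType_eq_zero] using h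
  have h3 : 0 < Multiset.card σ.cycleType := Multiset.card_pos.mpr h2
  simp only [L]; omega

/-- Key surgery lemma: removing a point from its cycle decreases `L` by one. -/
lemma L3 {σ : Perm α} {x : α} (hx : σ x ≠ x) :
    L (Equiv.swap x (σ x) * σ) + 1 = L σ := by
  classical
  set c := σ.cycleOf x with hc
  have hcyc : c.IsCycle := isCycle_cycleOf σ hx
  have hcx : c x = σ x := cycleOf_apply_self σ x
  have hcxx : c x ≠ x := by rw [hcx]; exact hx
  have hmem : c ∈ σ.cycleFactorsFinset :=
    cycleOf_mem_cycleFactorsFinset_iff.mpr (mem_support.mpr hx)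
  have hdisj : Perm.Disjoint (σ * c⁻¹) c := disjoint_mul_inv_of_mem_cycleFactorsFinset hmem
  set d := σ * c⁻¹ with hd
  have hσ : d * c = σ := by rw [hd]; simp [mul_assoc]
  have hdx : d x = x := (hdisj x).resolve_right hcxx
  have hccx : c (c x) ≠ c x := fun h => hcxx (c.injective h)
  have hdcx : d (c x) = c x := (hdisj (c x)).resolve_right hccx
  have hLσ : L σ = L d + L c := by rw [← hσ]; exact L_disjoint hdisj
  have hxcx : x ≠ c x := fun h => hcxx h.symm
  have hswapd : Perm.Disjoint (Equiv.swap x (c x)) d := by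
    intro a
    by_cases hax : a = x
    · subst hax; right; exact hdx
    by_cases hacx : a = c x
    · subst hacx; right; exact hdcx
    · left; exact swap_apply_of_ne_of_ne hax hacx
  have hrw : Equiv.swap x (σ x) * σ = d * (Equiv.swap x (c x) * c) := by
    rw [← hcx, ← mul_assoc, ← hswapd.commute.eq, mul_assoc, hσ]
  by_cases h2 : c (c x) = x
  · -- the cycle of x is a transposition
    have hcswap : c = Equiv.swap x (c x) :=
      hcyc.eq_swap_of_apply_apply_eq_self hcxx h2
    have hcc : Equiv.swap x (c x) * c = 1 := by
      nth_rewrite 2 [hcswap]; exact swap_mul_self _ _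
    have hLc : L c = 1 := by rw [hcswap]; exact L_swap hxcx
    rw [hrw, hcc, mul_one, hLσ, hLc]
  · -- the cycle of x has length ≥ 3
    have hcyc' : (Equiv.swap x (c x) * c).IsCycle := hcyc.swap_mul hcxx h2
    have hsupp : (Equiv.swap x (c x) * c).support = c.support \ {x} :=
      support_swap_mul_eq c x h2
    have hxmem : x ∈ c.support := mem_support.mpr hcxx
    have hcard : (Equiv.swap x (c x) * c).support.card + 1 = c.support.card := by
      rw [hsupp, Finset.card_sdiff_of_subset (by simpa using hxmem)]
      have := Finset.card_pos.mpr ⟨x, hxmem⟩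
      simp only [Finset.card_singleton]
      omega
    have hdisj2 : Perm.Disjoint d (Equiv.swap x (c x) * c) := by
      intro a
      by_cases hca : c a = a
      · right
        have hax : a ≠ x := fun h => hcxx (h ▸ hca)
        have hacx : a ≠ c x := fun h => hccx (h ▸ hca)
        rw [mul_apply, hca, swap_apply_of_ne_of_ne hax hacx]
      · exact Or.inl ((hdisj a).resolve_right hca)
    have hL1 := L_isCycle hcyc'
    have hL2 := L_isCycle hcyc
    rw [hrw, L_disjoint hdisj2, hLσ]
    omega

lemma exists_moved {σ : Perm α} (h : σ ≠ 1) : ∃ x, σ x ≠ x := by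
  by_contra hc
  push_neg at hc
  exact h (Equiv.ext fun a => hc a)

/-- Multiplying by any swap increases `L` by at most one. -/
lemma L_swap_mul_le_aux : ∀ (m : ℕ) (σ : Perm α), L σ ≤ m → ∀ x y : α, x ≠ y →
    L (Equiv.swap x y * σ) ≤ L σ + 1 := by
  intro m
  induction m with
  | zero =>
    intro σ h x y hxy
    have hσ : σ = 1 := by
      by_contra h1
      have := L_pos h1; omega
    subst hσ
    simp [L_swap hxy, L_one]
  | succ m ih =>
    intro σ h x y hxy
    have main : ∀ x y : α, x ≠ y → σ x ≠ x → L (Equiv.swap x y * σ) ≤ L σ + 1 := by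
      intro x y hxy hx
      by_cases hyw : y = σ x
      · subst hyw
        have := L3 hx
        omega
      set w := σ x with hw
      have hxw : x ≠ w := fun h => hx h.symm
      have hwy : w ≠ y := fun h => hyw h.symm
      set σ' := Equiv.swap x w * σ with hσ'
      have hL3 : L σ' + 1 = L σ := L3 hx
      set ρ := Equiv.swap w y * σ' with hρ
      have hLρ : L ρ ≤ L σ' + 1 := ih σ' (by omega) w y hwy
      have hσ'x : σ' x = x := by
        rw [hσ', mul_apply, ← hw, swap_apply_right]
      have hρx : ρ x = x := by
        rw [hρ, mul_apply, hσ'x, swap_apply_of_ne_of_ne hxw hxy]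
      have key : Equiv.swap x w * Equiv.swap w y * Equiv.swap x w = Equiv.swap x y := by
        have h0 := swap_mul_swap_mul_swap (x := y) (y := w) (z := x)
          (Ne.symm hwy) (Ne.symm hxy)
        rw [swap_comm w x, swap_comm y w] at h0
        exact h0
      have halg : Equiv.swap x y * σ = Equiv.swap x w * ρ := by
        rw [hρ, hσ', ← mul_assoc, ← mul_assoc, key]
      by_cases hρw : ρ w = w
      · have hdisj : Perm.Disjoint (Equiv.swap x w) ρ := by
          intro a
          by_cases hax : a = x
          · subst hax; right; exact hρx
          by_cases haw : a = w
          · subst haw; right; exact hρw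
          · left; exact swap_apply_of_ne_of_ne hax haw
        rw [halg, L_disjoint hdisj, L_swap hxw]
        omega
      · set σ₂ := Equiv.swap x w * ρ with hσ₂
        have hσ₂x : σ₂ x = w := by rw [hσ₂, mul_apply, hρx, swap_apply_left]
        have hσ₂ne : σ₂ x ≠ x := by rw [hσ₂x]; exact Ne.symm hxw
        have hkey := L3 hσ₂ne
        rw [hσ₂x] at hkey
        have h2 : Equiv.swap x w * σ₂ = ρ := by
          rw [hσ₂, ← mul_assoc, swap_mul_self, one_mul]
        rw [h2] at hkey
        rw [halg]
        omega
    by_cases hx : σ x = x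
    · by_cases hy : σ y = y
      · have hdisj : Perm.Disjoint (Equiv.swap x y) σ := by
          intro a
          by_cases hax : a = x
          · subst hax; right; exact hx
          by_cases hay : a = y
          · subst hay; right; exact hy
          · left; exact swap_apply_of_ne_of_ne hax hay
        rw [L_disjoint hdisj, L_swap hxy]
        omega
      · rw [swap_comm]; exact main y x (Ne.symm hxy) hy
    · exact main x y hxy hx

lemma L_swap_mul_le (σ : Perm α) {x y : α} (hxy : x ≠ y) :
    L (Equiv.swap x y * σ) ≤ L σ + 1 :=
  L_swap_mul_le_aux (L σ) σ le_rfl x y hxy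

/-- Subadditivity of reflection length. -/
lemma L_mul_le_aux : ∀ (m : ℕ) (σ τ : Perm α), L σ ≤ m → L (σ * τ) ≤ L σ + L τ := by
  intro m
  induction m with
  | zero =>
    intro σ τ h
    have hσ : σ = 1 := by
      by_contra h1
      have := L_pos h1; omega
    subst hσ; simp [L_one]
  | succ m ih =>
    intro σ τ h
    by_cases hσ : σ = 1
    · subst hσ; simp [L_one]
    · obtain ⟨x, hx⟩ := exists_moved hσ
      set σ₁ := Equiv.swap x (σ x) * σ with hσ₁
      have hL3 : L σ₁ + 1 = L σ := L3 hx
      have halg : σ * τ = Equiv.swap x (σ x) * (σ₁ * τ) := by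
        rw [hσ₁, ← mul_assoc, ← mul_assoc, swap_mul_self, one_mul]
      have h1 : L (Equiv.swap x (σ x) * (σ₁ * τ)) ≤ L (σ₁ * τ) + 1 :=
        L_swap_mul_le _ (fun h => hx h.symm)
      have h2 : L (σ₁ * τ) ≤ L σ₁ + L τ := ih σ₁ τ (by omega)
      rw [halg]
      omega

lemma L_mul_le (σ τ : Perm α) : L (σ * τ) ≤ L σ + L τ :=
  L_mul_le_aux (L σ) σ τ le_rfl

/-- On a geodesic, fixed points of the product are fixed by the first factor. -/
lemma fix_lemma {a g : Perm α} {x : α} (hL : L (a * g) = L a + L g)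
    (hfix : (a * g) x = x) : a x = x := by
  by_contra hax
  have hgx : g x ≠ x := by
    intro h
    apply hax
    calc a x = a (g x) := by rw [h]
      _ = x := by rw [← mul_apply, hfix]
  have h1 : L (Equiv.swap x (g x) * g) + 1 = L g := L3 hgx
  have hagx : a (g x) = x := by rw [← mul_apply, hfix]
  have hainv : a⁻¹ x = g x := by
    apply a.injective
    rw [show a (a⁻¹ x) = x from a.apply_symm_apply x, hagx]
  have hainvx : a⁻¹ x ≠ x := by rw [hainv]; exact hgx
  have h2 : L (Equiv.swap x (g x) * a⁻¹) + 1 = L a⁻¹ := by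
    have h0 := L3 hainvx
    rw [hainv] at h0
    exact h0
  have h3 : L (a * Equiv.swap x (g x)) = L (Equiv.swap x (g x) * a⁻¹) := by
    rw [← L_inv (a * Equiv.swap x (g x)), mul_inv_rev, swap_inv]
  have h4 : a * g = (a * Equiv.swap x (g x)) * (Equiv.swap x (g x) * g) := by
    rw [mul_assoc, ← mul_assoc (Equiv.swap x (g x)), swap_mul_self, one_mul]
  have h5 : L (a * g) ≤ L (a * Equiv.swap x (g x)) + L (Equiv.swap x (g x) * g) := by
    rw [h4]; exact L_mul_le _ _
  have h6 : L a⁻¹ = L a := L_inv a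
  omega

end NCG

/-- The Cayley distance `d(σ, τ) = n - k(στ⁻¹)` on the symmetric group. -/
def cayleyDist {n : ℕ} (σ τ : Equiv.Perm (Fin n)) : ℕ :=
  n - numCycles (σ * τ⁻¹)

namespace NCG

lemma numCycles_add_L {n : ℕ} (σ : Equiv.Perm (Fin n)) : numCycles σ + L σ = n := by
  have h1 : σ.cycleType.sum ≤ n := by
    rw [sum_cycleType]
    calc σ.support.card ≤ Finset.univ.card := Finset.card_le_univ _
      _ = n := by simp
  have h2 := card_le_sum_cycleType σ
  simp only [numCycles, L]
  omega

lemma L_stdCycle (n : ℕ) (h : 1 ≤ n) : L (stdCycle n) + 1 = n := by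
  rw [stdCycle, L_inv]
  match n, h with
  | 1, _ =>
    have h1 : (finRotate 1 : Equiv.Perm (Fin 1)) = 1 := finRotate_one
    rw [h1, L_one]
  | (m+2), _ => simp [L, cycleType_finRotate]

end NCG

/-- Let `τ ∈ S_n` be a non-crossing permutation such that `ητ⁻¹` has at least one
fixed point, where `η` is the standard `n`-cycle. If `σ` lies on a Cayley geodesic
between `η` and `τ`, i.e. `d(η,τ) = d(η,σ) + d(σ,τ)`, then `σ` is also non-crossing
and `ησ⁻¹` has at least one fixed point. -/
theorem noncrossing_geodesic (n : ℕ) (τ σ : Equiv.Perm (Fin n))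
    (hnc : numCycles τ + numCycles (stdCycle n * τ⁻¹) = n + 1)
    (hfix : ∃ x, (stdCycle n * τ⁻¹) x = x)
    (hgeo : cayleyDist (stdCycle n) τ = cayleyDist (stdCycle n) σ + cayleyDist σ τ) :
    (numCycles σ + numCycles (stdCycle n * σ⁻¹) = n + 1) ∧
      ∃ x, (stdCycle n * σ⁻¹) x = x := by
  obtain ⟨x, hx⟩ := hfix
  rcases Nat.eq_zero_or_pos n with hn | hn
  · subst hn; exact x.elim0
  have hK : ∀ π : Equiv.Perm (Fin n), numCycles π + NCG.L π = n := NCG.numCycles_add_L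
  have hcd : ∀ π ρ : Equiv.Perm (Fin n), cayleyDist π ρ = NCG.L (π * ρ⁻¹) := by
    intro π ρ
    have := hK (π * ρ⁻¹)
    rw [cayleyDist]
    omega
  have hη : NCG.L (stdCycle n) + 1 = n := NCG.L_stdCycle n hn
  have halg : (stdCycle n * σ⁻¹) * (σ * τ⁻¹) = stdCycle n * τ⁻¹ := by
    rw [mul_assoc, ← mul_assoc σ⁻¹, inv_mul_cancel, one_mul]
  have hgeo' : NCG.L (stdCycle n * τ⁻¹) =
      NCG.L (stdCycle n * σ⁻¹) + NCG.L (σ * τ⁻¹) := by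
    rwa [hcd, hcd, hcd] at hgeo
  have ht1 : NCG.L σ ≤ NCG.L (σ * τ⁻¹) + NCG.L τ := by
    have h0 := NCG.L_mul_le (σ * τ⁻¹) τ
    rwa [inv_mul_cancel_right] at h0
  have ht2 : NCG.L (stdCycle n) ≤ NCG.L (stdCycle n * σ⁻¹) + NCG.L σ := by
    have h0 := NCG.L_mul_le (stdCycle n * σ⁻¹) σ
    rwa [inv_mul_cancel_right] at h0
  have hfixσ : (stdCycle n * σ⁻¹) x = x := by
    apply NCG.fix_lemma (g := σ * τ⁻¹)
    · rw [halg]; exact hgeo'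
    · rw [halg]; exact hx
  refine ⟨?_, x, hfixσ⟩
  have e1 := hK τ
  have e2 := hK (stdCycle n * τ⁻¹)
  have e3 := hK σ
  have e4 := hK (stdCycle n * σ⁻¹)
  have e5 := hK (σ * τ⁻¹)
  omega
end

section
/- For every real ω that is not an integer multiple of π, the series −log 2 − Σ_{n=1}^∞ cos(2nω)/n converges and equals log|sin ω|. -/
open Filter Finset Complex Topology

lemma dirichlet_lim (z : ℂ) (hz1 : ‖z‖ = 1) (hz : z ≠ 1) :
    ∃ L : ℂ, Tendsto (fun N : ℕ => ∑ n ∈ range N, z ^ n / n) atTop (𝓝 L) := by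
  set G : ℕ → ℂ := fun n => ∑ i ∈ range n, z ^ i with hG
  set C : ℝ := 2 / ‖z - 1‖ with hC
  have hz1' : z - 1 ≠ 0 := sub_ne_zero.mpr hz
  have hzpos : 0 < ‖z - 1‖ := norm_pos_iff.mpr hz1'
  have hGb : ∀ n, ‖G n‖ ≤ C := by
    intro n
    show ‖∑ i ∈ range n, z ^ i‖ ≤ C
    rw [geom_sum_eq hz, norm_div, hC]
    gcongr
    calc ‖z ^ n - 1‖ ≤ ‖z ^ n‖ + ‖(1:ℂ)‖ := norm_sub_le _ _
      _ = 2 := by norm_num [norm_pow, hz1]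
  -- summation by parts identity
  have key : ∀ n : ℕ, ∑ i ∈ range n, z ^ i / i =
      ((n - 1 : ℕ) : ℂ)⁻¹ • G n -
        ∑ i ∈ range (n - 1), ((((i+1 : ℕ) : ℂ)⁻¹ - ((i : ℕ) : ℂ)⁻¹)) • G (i + 1) := by
    intro n
    rw [← Finset.sum_range_by_parts (fun i : ℕ => ((i : ℕ) : ℂ)⁻¹) (fun i => z ^ i)]
    congr 1
    ext i
    rw [smul_eq_mul, inv_mul_eq_div]
  -- term 1 → 0
  have h1 : Tendsto (fun n : ℕ => ((n - 1 : ℕ) : ℂ)⁻¹ • G n) atTop (𝓝 0) := by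
    have hg : Tendsto (fun n : ℕ => ((n - 1 : ℕ) : ℝ)⁻¹ * C) atTop (𝓝 0) := by
      have : Tendsto (fun n : ℕ => ((n - 1 : ℕ) : ℝ)⁻¹) atTop (𝓝 0) :=
        tendsto_inv_atTop_nhds_zero_nat.comp (tendsto_sub_atTop_nat 1)
      simpa using this.mul_const C
    refine squeeze_zero_norm (fun n => ?_) hg
    rw [norm_smul]
    apply mul_le_mul _ (hGb n) (norm_nonneg _) (by positivity)
    simp
  -- term 2: summable
  have hsum : Summable (fun i : ℕ => ((((i+1 : ℕ) : ℂ)⁻¹ - ((i : ℕ) : ℂ)⁻¹)) • G (i + 1)) := by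
    apply Summable.of_norm_bounded (g := fun i : ℕ => (2 / ((i : ℝ) + 1) ^ 2) * C)
    · have : Summable (fun i : ℕ => (1 : ℝ) / ((i : ℝ) + 1) ^ 2) := by
        have := (summable_nat_add_iff 1).mpr (Real.summable_one_div_nat_pow.mpr one_lt_two)
        simpa using this
      simpa [mul_comm, mul_assoc, div_eq_mul_inv] using (this.mul_left 2).mul_right C
    · intro i
      rw [norm_smul]
      apply mul_le_mul _ (hGb _) (norm_nonneg _) (by positivity)
      -- ‖1/(i+1) - 1/i‖ ≤ 2/(i+1)^2
      rcases Nat.eq_zero_or_pos i with rfl | hi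
      · norm_num
      · have hi0 : (i : ℝ) ≠ 0 := Nat.cast_ne_zero.mpr hi.ne'
        have hi0' : (0:ℝ) < i := Nat.cast_pos.mpr hi
        have : ((((i+1 : ℕ) : ℂ)⁻¹ - ((i : ℕ) : ℂ)⁻¹)) = ((((i+1 : ℕ) : ℝ)⁻¹ - ((i : ℕ) : ℝ)⁻¹) : ℝ) := by
          push_cast; ring
        rw [this, Complex.norm_real, Real.norm_eq_abs]
        push_cast
        rw [abs_sub_comm, _root_.abs_of_nonneg (by
          rw [sub_nonneg]
          exact inv_anti₀ hi0' (by linarith))]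
        rw [inv_sub_inv hi0 (by positivity)]
        rw [div_le_div_iff₀ (by positivity) (by positivity)]
        have h1i : 1 ≤ (i:ℝ) := by exact_mod_cast hi
        nlinarith [sq_nonneg ((i:ℝ) - 1)]
  refine ⟨0 - ∑' i, ((((i+1 : ℕ) : ℂ)⁻¹ - ((i : ℕ) : ℂ)⁻¹)) • G (i + 1), ?_⟩
  have h2 : Tendsto (fun n : ℕ => ∑ i ∈ range (n-1),
      ((((i+1 : ℕ) : ℂ)⁻¹ - ((i : ℕ) : ℂ)⁻¹)) • G (i + 1)) atTop
      (𝓝 (∑' i, ((((i+1 : ℕ) : ℂ)⁻¹ - ((i : ℕ) : ℂ)⁻¹)) • G (i + 1))) :=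
    hsum.hasSum.tendsto_sum_nat.comp (tendsto_sub_atTop_nat 1)
  simp only [key]
  exact h1.sub h2

/-- For every real `ω` that is not an integer multiple of `π`, the series
`-log 2 - ∑_{n=1}^∞ cos(2nω)/n` converges and equals `log |sin ω|`. -/
theorem log_abs_sin_fourier_series (ω : ℝ) (hω : ∀ k : ℤ, ω ≠ k * Real.pi) :
    Filter.Tendsto
      (fun N : ℕ =>
        -Real.log 2 - ∑ n ∈ Finset.range N, Real.cos (2 * (n + 1) * ω) / (n + 1))
      Filter.atTop (nhds (Real.log |Real.sin ω|)) := by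
  set z : ℂ := Complex.exp (2 * ω * Complex.I) with hzdef
  have hz1 : ‖z‖ = 1 := by
    rw [hzdef]
    rw [show ((2 : ℂ) * ω * Complex.I) = ((2 * ω : ℝ) : ℂ) * Complex.I by push_cast; ring]
    exact Complex.norm_exp_ofReal_mul_I _
  have hzne : z ≠ 1 := by
    rw [hzdef, Ne, Complex.exp_eq_one_iff]
    push_neg
    intro k hk
    apply hω k
    have h2 : (2 * ω : ℝ) = k * (2 * Real.pi) := by
      have h3 := congrArg Complex.im hk
      simpa using h3
    linarith
  have hsin : Real.sin ω ≠ 0 := by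
    rw [Ne, Real.sin_eq_zero_iff]
    push_neg
    intro k hk
    exact hω k hk.symm
  obtain ⟨L, hL⟩ := dirichlet_lim z hz1 hzne
  -- identify L via Abel's theorem
  have habel := Complex.tendsto_tsum_powerSeries_nhdsWithin_lt (f := fun n => z ^ n / n) hL
  rw [Filter.tendsto_map'_iff] at habel
  have hslit : (1 - z) ∈ Complex.slitPlane := by
    rw [Complex.mem_slitPlane_iff]
    left
    have hre : z.re = Real.cos (2 * ω) := by
      rw [hzdef, show ((2 : ℂ) * ω * Complex.I) = ((2 * ω : ℝ) : ℂ) * Complex.I by push_cast; ring]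
      exact Complex.exp_ofReal_mul_I_re _
    have : Real.cos (2 * ω) ≠ 1 := by
      rw [Ne, Real.cos_eq_one_iff]
      push_neg
      intro k hk
      exact hω k (by linarith)
    have hle : Real.cos (2 * ω) ≤ 1 := Real.cos_le_one _
    simp only [Complex.sub_re, Complex.one_re, hre]
    cases lt_or_eq_of_le hle with
    | inl h => linarith
    | inr h => exact absurd h this
  have hcont : Filter.Tendsto (fun x : ℝ => -Complex.log (1 - (x : ℂ) * z)) (nhdsWithin 1 (Set.Iio 1))
      (𝓝 (-Complex.log (1 - z))) := by
    have hc : ContinuousAt (fun x : ℝ => -Complex.log (1 - (x : ℂ) * z)) 1 :=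
      (ContinuousAt.clog (by fun_prop) (by simpa using hslit)).neg
    have h5 := hc.tendsto.mono_left (nhdsWithin_le_nhds (s := Set.Iio 1))
    simpa using h5
  have heq : ∀ᶠ x : ℝ in nhdsWithin 1 (Set.Iio 1),
      (∑' n : ℕ, (z ^ n / n) * (x : ℂ) ^ n) = -Complex.log (1 - (x : ℂ) * z) := by
    filter_upwards [Ioo_mem_nhdsLT_of_mem (Set.mem_Ioc.mpr ⟨zero_lt_one, le_refl 1⟩)] with x hx
    have hnorm : ‖(x : ℂ) * z‖ < 1 := by
      rw [norm_mul, hz1, mul_one, Complex.norm_real, Real.norm_eq_abs,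
        abs_of_pos hx.1]
      exact hx.2
    have := (Complex.hasSum_taylorSeries_neg_log hnorm).tsum_eq
    rw [← this]
    congr 1
    ext n
    rw [mul_pow]
    ring
  have hLeq : L = -Complex.log (1 - z) := by
    exact tendsto_nhds_unique (habel.congr' heq) hcont
  -- compute norm of 1 - z
  have hnz : ‖(1 : ℂ) - z‖ = 2 * |Real.sin ω| := by
    have hre : z.re = Real.cos (2 * ω) := by
      rw [hzdef, show ((2 : ℂ) * ω * Complex.I) = ((2 * ω : ℝ) : ℂ) * Complex.I by push_cast; ring]
      exact Complex.exp_ofReal_mul_I_re _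
    have him : z.im = Real.sin (2 * ω) := by
      rw [hzdef, show ((2 : ℂ) * ω * Complex.I) = ((2 * ω : ℝ) : ℂ) * Complex.I by push_cast; ring]
      exact Complex.exp_ofReal_mul_I_im _
    have hsq : ‖(1 : ℂ) - z‖ ^ 2 = (2 * |Real.sin ω|) ^ 2 := by
      rw [Complex.sq_norm, Complex.normSq_apply, Complex.sub_re,
        Complex.sub_im, Complex.one_re, Complex.one_im, hre, him]
      have h1 := Real.sin_sq_add_cos_sq (2 * ω)
      have h2 := Real.cos_two_mul ω
      have h3 := Real.sin_sq_add_cos_sq ω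
      have h4 : |Real.sin ω| ^ 2 = Real.sin ω ^ 2 := sq_abs _
      nlinarith
    have h2 : (0:ℝ) ≤ 2 * |Real.sin ω| := by positivity
    nlinarith [norm_nonneg ((1:ℂ) - z)]
  -- real part of L
  have hLre : L.re = -(Real.log 2 + Real.log |Real.sin ω|) := by
    rw [hLeq, Complex.neg_re, Complex.log_re, hnz,
      Real.log_mul two_ne_zero (abs_ne_zero.mpr hsin)]
  -- take real parts of the convergence
  have hre2 : Filter.Tendsto (fun N : ℕ => (∑ n ∈ Finset.range N, z ^ n / n).re) Filter.atTop
      (𝓝 L.re) := (Complex.continuous_re.tendsto L).comp hL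
  have hre3 : Filter.Tendsto (fun N : ℕ => (∑ n ∈ Finset.range (N + 1), z ^ n / n).re)
      Filter.atTop (𝓝 L.re) := hre2.comp (tendsto_add_atTop_nat 1)
  have hterm : ∀ N : ℕ, (∑ n ∈ Finset.range (N + 1), z ^ n / n).re =
      ∑ n ∈ Finset.range N, Real.cos (2 * (n + 1) * ω) / (n + 1) := by
    intro N
    rw [Finset.sum_range_succ' (fun n => z ^ n / (n : ℂ)) N]
    have h0 : (z ^ 0 / ((0:ℕ) : ℂ)).re = 0 := by simp
    rw [Complex.add_re, h0, add_zero, Complex.re_sum]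
    apply Finset.sum_congr rfl
    intro n _
    have : z ^ (n + 1) = Complex.exp (((2 * (n + 1) * ω : ℝ) : ℂ) * Complex.I) := by
      rw [hzdef, ← Complex.exp_nat_mul]
      congr 1
      push_cast
      ring
    rw [this]
    rw [show (((n:ℕ) + 1 : ℕ) : ℂ) = (((n + 1 : ℝ)) : ℂ) by push_cast; ring]
    rw [Complex.div_ofReal_re, Complex.exp_ofReal_mul_I_re]
  have hfinal : Filter.Tendsto
      (fun N : ℕ => ∑ n ∈ Finset.range N, Real.cos (2 * (n + 1) * ω) / (n + 1))
      Filter.atTop (𝓝 L.re) := by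
    refine hre3.congr fun N => hterm N
  have := hfinal.const_sub (-Real.log 2)
  rw [hLre] at this
  convert this using 2
  ring
end

section
/- As d → ∞ along even integers, (4/d²) Σ_{k=0}^{d/2−1} log[(d/2+k)! / ((k+1)! · (k!)²)] = 2 log 2 + O((log d)/d). Equivalently, the normalization constant N = 2^{−d²/4} ∏_{k=0}^{d/2−1} (d/2+k)!/((k+1)!(k!)²) satisfies −(4/d²) log N = −log 2 + O((log d)/d). -/
open Asymptotics Filter Finset

lemma log_ineq1 (m : ℕ) (hm : 1 ≤ m) : (m:ℝ) * (Real.log (m+1) - Real.log m) ≤ 1 := by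
  have hm0 : (0:ℝ) < m := by exact_mod_cast hm
  have h1 : Real.log ((m:ℝ)+1) - Real.log m = Real.log (((m:ℝ)+1)/m) := by
    rw [Real.log_div (by positivity) (ne_of_gt hm0)]
  have h2 : Real.log (((m:ℝ)+1)/m) ≤ ((m:ℝ)+1)/m - 1 :=
    Real.log_le_sub_one_of_pos (by positivity)
  rw [h1]
  have h3 : ((m:ℝ)+1)/m - 1 = 1/m := by field_simp; ring
  rw [h3] at h2
  have := mul_le_mul_of_nonneg_left h2 hm0.le
  have h4 : (m:ℝ) * (1/m) = 1 := by field_simp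
  linarith

lemma log_ineq2 (m : ℕ) (hm : 1 ≤ m) : 1 ≤ ((m:ℝ)+1) * (Real.log (m+1) - Real.log m) := by
  have hm0 : (0:ℝ) < m := by exact_mod_cast hm
  have h1 : Real.log (m:ℝ) - Real.log ((m:ℝ)+1) = Real.log ((m:ℝ)/(m+1)) := by
    rw [Real.log_div (ne_of_gt hm0) (by positivity)]
  have h2 : Real.log ((m:ℝ)/(m+1)) ≤ (m:ℝ)/(m+1) - 1 :=
    Real.log_le_sub_one_of_pos (by positivity)
  rw [← h1] at h2
  have h3 : (m:ℝ)/(m+1) - 1 = -(1/(m+1)) := by field_simp; ring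
  rw [h3] at h2
  have hp : (0:ℝ) < (m:ℝ)+1 := by positivity
  have h4 : 1/((m:ℝ)+1) ≤ Real.log ((m:ℝ)+1) - Real.log m := by linarith
  have := mul_le_mul_of_nonneg_left h4 hp.le
  have h5 : ((m:ℝ)+1) * (1/((m:ℝ)+1)) = 1 := by field_simp
  linarith

lemma factorial_log_bounds (m : ℕ) (hm : 1 ≤ m) :
    (m:ℝ) * Real.log m - m + 1 ≤ Real.log (Nat.factorial m) ∧
    Real.log (Nat.factorial m) ≤ (m:ℝ) * Real.log m - m + 1 + Real.log m := by
  induction m, hm using Nat.le_induction with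
  | base => simp
  | succ m hm ih =>
    have hfs : ((Nat.factorial (m+1) : ℕ) : ℝ) = ((m:ℝ)+1) * (Nat.factorial m : ℝ) := by
      rw [Nat.factorial_succ]; push_cast; ring
    have hf0 : (Nat.factorial m : ℝ) ≠ 0 := by positivity
    have hlog : Real.log (Nat.factorial (m+1)) =
        Real.log ((m:ℝ)+1) + Real.log (Nat.factorial m) := by
      rw [hfs, Real.log_mul (by positivity) hf0]
    have l1 := log_ineq1 m hm
    have l2 := log_ineq2 m hm
    push_cast
    push_cast at ih hlog l1 l2
    rw [hlog]
    constructor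
    · nlinarith [ih.1]
    · nlinarith [ih.2]

noncomputable def Lf (m : ℕ) : ℝ := Real.log (Nat.factorial m)
noncomputable def Gf (m : ℕ) : ℝ := (m:ℝ)^2/2 * Real.log m - 3*(m:ℝ)^2/4
noncomputable def Tf (m : ℕ) : ℝ := ∑ j ∈ Finset.range m, Lf j

lemma Tf_bound (m : ℕ) (hm : 1 ≤ m) :
    |Tf m - Gf m| ≤ 3/4 + m * (2 + Real.log m) := by
  induction m, hm using Nat.le_induction with
  | base =>
    have : Tf 1 = 0 := by simp [Tf, Lf]
    rw [this]
    have : Gf 1 = -(3/4) := by simp [Gf]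
    rw [this]
    rw [sub_neg_eq_add, zero_add, abs_of_nonneg (by norm_num : (0:ℝ) ≤ 3/4)]
    norm_num
  | succ m hm ih =>
    have hm0 : (1:ℝ) ≤ m := by exact_mod_cast hm
    have hTs : Tf (m+1) = Tf m + Lf m := by
      simp [Tf, Finset.sum_range_succ]
    have l1 := log_ineq1 m hm
    have l2 := log_ineq2 m hm
    have hA := factorial_log_bounds m hm
    have hlogm : 0 ≤ Real.log m := Real.log_natCast_nonneg m
    have hlogmono : Real.log m ≤ Real.log ((m:ℝ)+1) := by
      apply Real.log_le_log (by linarith) (by linarith)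
    have hlog2 : (1:ℝ)/2 ≤ Real.log ((m:ℝ)+1) := by
      have h2 : Real.log 2 ≤ Real.log ((m:ℝ)+1) :=
        Real.log_le_log (by norm_num) (by linarith)
      have := Real.log_two_gt_d9
      linarith
    -- key: |Lf m - (Gf (m+1) - Gf m)| ≤ 2 + log (m+1)
    have hkey : |Lf m - (Gf (m+1) - Gf m)| ≤ 2 + Real.log ((m:ℝ)+1) := by
      have hGdef : Gf (m+1) - Gf m =
          ((m:ℝ)+1)^2/2 * Real.log ((m:ℝ)+1) - 3*((m:ℝ)+1)^2/4
            - ((m:ℝ)^2/2 * Real.log m - 3*(m:ℝ)^2/4) := by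
        unfold Gf; push_cast; ring
      rw [abs_le, hGdef]
      unfold Lf
      constructor
      · nlinarith [hA.1, mul_le_mul_of_nonneg_left l1 (le_of_lt (lt_of_lt_of_le one_pos hm0))]
      · nlinarith [hA.2, mul_le_mul_of_nonneg_left l2 (by linarith : (0:ℝ) ≤ (m:ℝ)+1)]
    have habs : |Tf (m+1) - Gf (m+1)| ≤ |Tf m - Gf m| + |Lf m - (Gf (m+1) - Gf m)| := by
      rw [hTs]
      have : Tf m + Lf m - Gf (m+1) = (Tf m - Gf m) + (Lf m - (Gf (m+1) - Gf m)) := by ring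
      rw [this]
      exact abs_add_le _ _
    have hcast : ((m+1 : ℕ):ℝ) = (m:ℝ)+1 := by push_cast; ring
    rw [hcast]
    have : (3:ℝ)/4 + m * (2 + Real.log m) + (2 + Real.log ((m:ℝ)+1))
        ≤ 3/4 + ((m:ℝ)+1) * (2 + Real.log ((m:ℝ)+1)) := by
      nlinarith
    linarith [habs, ih, hkey]

/-- As `d → ∞` along even integers,
`(4/d²) ∑_{k=0}^{d/2-1} log[(d/2+k)! / ((k+1)!·(k!)²)] = 2 log 2 + O((log d)/d)`;
equivalently, the normalization constant
`N = 2^{-d²/4} ∏_{k=0}^{d/2-1} (d/2+k)!/((k+1)!(k!)²)` satisfies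
`-(4/d²) log N = -log 2 + O((log d)/d)`. -/
theorem normalization_constant_asymptotics :
    (fun d : ℕ =>
        (4 / (d : ℝ) ^ 2) *
            (∑ k ∈ Finset.range (d / 2),
              Real.log ((Nat.factorial (d / 2 + k) : ℝ) /
                ((Nat.factorial (k + 1) : ℝ) * (Nat.factorial k : ℝ) ^ 2))) -
          2 * Real.log 2)
      =O[atTop ⊓ Filter.principal {d : ℕ | Even d}]
      (fun d : ℕ => Real.log d / d) := by
  rw [Asymptotics.isBigO_iff]
  refine ⟨80, ?_⟩
  rw [Filter.eventually_inf_principal]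
  filter_upwards [Filter.eventually_ge_atTop 2] with d hd hev
  replace hev : Even d := hev
  obtain ⟨n, rfl⟩ := hev
  have hn1 : 1 ≤ n := by omega
  have hhalf : (n + n) / 2 = n := by omega
  simp only [hhalf]
  -- rewrite each term of the sum
  have hterm : ∀ k, Real.log ((Nat.factorial (n + k) : ℝ) /
      ((Nat.factorial (k+1) : ℝ) * (Nat.factorial k : ℝ)^2)) =
      Lf (n+k) - (Lf (k+1) + 2 * Lf k) := by
    intro k
    unfold Lf
    have h1 : (Nat.factorial (n+k) : ℝ) ≠ 0 := by positivity
    have h2 : (Nat.factorial (k+1) : ℝ) ≠ 0 := by positivity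
    have h3 : (Nat.factorial k : ℝ) ≠ 0 := by positivity
    rw [Real.log_div h1 (by positivity), Real.log_mul h2 (by positivity),
      Real.log_pow]
    push_cast; ring
  rw [Finset.sum_congr rfl (fun k _ => hterm k)]
  -- compute the sum
  have h1 : ∑ k ∈ Finset.range n, Lf (n+k) = Tf (2*n) - Tf n := by
    have h := Finset.sum_Ico_eq_sum_range Lf n (2*n)
    have h2n : 2*n - n = n := by omega
    rw [h2n] at h
    rw [← h, Finset.sum_Ico_eq_sub Lf (by omega)]
    rfl
  have h2 : ∑ k ∈ Finset.range n, Lf (k+1) = Tf n + Lf n := by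
    have h := Finset.sum_range_succ' Lf n
    have hL0 : Lf 0 = 0 := by simp [Lf]
    have hTn1 : Tf (n+1) = Tf n + Lf n := by simp [Tf, Finset.sum_range_succ]
    have : Tf (n+1) = ∑ k ∈ Finset.range n, Lf (k+1) + Lf 0 := h
    rw [hL0, add_zero] at this
    rw [← this, hTn1]
  have hsum : ∑ k ∈ Finset.range n, (Lf (n+k) - (Lf (k+1) + 2 * Lf k)) =
      Tf (2*n) - 4 * Tf n - Lf n := by
    rw [Finset.sum_sub_distrib, Finset.sum_add_distrib, h1, h2, ← Finset.mul_sum]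
    have : ∑ k ∈ Finset.range n, Lf k = Tf n := rfl
    rw [this]; ring
  rw [hsum]
  -- bounds
  set N : ℝ := (n : ℝ) with hN
  have hN1 : (1:ℝ) ≤ N := by rw [hN]; exact_mod_cast hn1
  have hx := Tf_bound (2*n) (by omega)
  have hy := Tf_bound n hn1
  have hcast2n : ((2*n : ℕ) : ℝ) = 2*N := by push_cast; ring
  rw [hcast2n] at hx
  have hfac1 : 1 ≤ Nat.factorial n := Nat.one_le_iff_ne_zero.mpr (Nat.factorial_ne_zero n)
  have hLn0 : 0 ≤ Lf n := by
    unfold Lf; apply Real.log_nonneg; exact_mod_cast hfac1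
  have hLnu : Lf n ≤ N * Real.log N := by
    unfold Lf
    calc Real.log (Nat.factorial n) ≤ Real.log ((n:ℝ)^n) := by
          apply Real.log_le_log (by positivity)
          exact_mod_cast Nat.factorial_le_pow n
      _ = N * Real.log N := by rw [Real.log_pow]; try ring
  have hlogN : 0 ≤ Real.log N := Real.log_nonneg hN1
  have hlog2N : Real.log (2*N) = Real.log 2 + Real.log N :=
    Real.log_mul two_ne_zero (by linarith)
  have hlog2 : (0.6931471803 : ℝ) < Real.log 2 := Real.log_two_gt_d9
  -- main term identity
  have hG : Gf (2*n) - 4 * Gf n = 2 * N^2 * Real.log 2 := by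
    unfold Gf
    rw [hcast2n, hlog2N]
    ring
  -- goal manipulation
  have hdcast : ((n + n : ℕ) : ℝ) = 2*N := by push_cast; ring
  rw [hdcast]
  set x := Tf (2*n) - Gf (2*n) with hxdef
  set y := Tf n - Gf n with hydef
  have hS : Tf (2*n) - 4 * Tf n - Lf n = 2 * N^2 * Real.log 2 + (x - 4*y - Lf n) := by
    rw [hxdef, hydef]; linarith [hG]
  rw [hS]
  have hN0 : (0:ℝ) < N := by linarith
  have hmain : 4 / (2*N)^2 * (2 * N^2 * Real.log 2 + (x - 4*y - Lf n)) - 2 * Real.log 2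
      = (x - 4*y - Lf n) / N^2 := by
    field_simp
    ring
  rw [hmain]
  -- norms
  rw [Real.norm_eq_abs, Real.norm_eq_abs, abs_div, abs_div]
  have hlog2Npos : 0 < Real.log (2*N) := by linarith
  rw [abs_of_nonneg (by positivity : (0:ℝ) ≤ N^2), abs_of_nonneg hlog2Npos.le,
    abs_of_nonneg (by linarith : (0:ℝ) ≤ 2*N)]
  rw [div_le_iff₀ (by positivity)]
  have hcore : |x - 4*y - Lf n| ≤ 40 * N * Real.log (2*N) := by
    have habs : |x - 4*y - Lf n| ≤ |x| + 4*|y| + Lf n := by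
      have := abs_sub (x - 4*y) (Lf n)
      have h4 : |x - 4*y| ≤ |x| + 4*|y| := by
        calc |x - 4*y| ≤ |x| + |4*y| := abs_sub _ _
          _ = |x| + 4*|y| := by rw [abs_mul]; norm_num
      calc |x - 4*y - Lf n| ≤ |x - 4*y| + |Lf n| := abs_sub _ _
        _ ≤ |x| + 4*|y| + Lf n := by rw [abs_of_nonneg hLn0]; linarith
    have hlogmono : Real.log N ≤ Real.log (2*N) :=
      Real.log_le_log hN0 (by linarith)
    nlinarith [mul_nonneg (by linarith : (0:ℝ) ≤ N - 1)
        (by linarith : (0:ℝ) ≤ Real.log (2*N) - 0.6931471803),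
      mul_nonneg (by linarith : (0:ℝ) ≤ N) (sub_nonneg.mpr hlogmono)]
  calc |x - 4*y - Lf n| ≤ 40 * N * Real.log (2*N) := hcore
    _ ≤ 80 * (Real.log (2*N) / (2*N)) * N^2 := by
        have heq : 80 * (Real.log (2*N) / (2*N)) * N^2 = 40 * N * Real.log (2*N) := by
          field_simp; ring
        rw [heq]
end

section
/- The number of non-crossing perfect matchings of {1, 2, …, 2n} equals the n-th Catalan number C_n = (1/(n+1))·binom(2n, n). -/
open Finset List DyckStep

namespace NCPM

variable (v : ℕ → Bool) (N : ℕ)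

def aa (m : ℕ) : ℕ := ((Finset.range m).filter (fun i => i < N ∧ v i = true)).card
def bb (m : ℕ) : ℕ := ((Finset.range m).filter (fun i => i < N ∧ v i = false)).card
def ht (m : ℕ) : ℤ := (aa v N m : ℤ) - bb v N m

lemma aa_succ (m : ℕ) :
    aa v N (m + 1) = aa v N m + (if m < N ∧ v m = true then 1 else 0) := by
  unfold aa
  rw [Finset.range_add_one, Finset.filter_insert]
  split <;> simp [Finset.card_insert_of_notMem]

lemma bb_succ (m : ℕ) :
    bb v N (m + 1) = bb v N m + (if m < N ∧ v m = false then 1 else 0) := by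
  unfold bb
  rw [Finset.range_add_one, Finset.filter_insert]
  split <;> simp [Finset.card_insert_of_notMem]

lemma ht_zero : ht v N 0 = 0 := by simp [ht, aa, bb]

lemma ht_succ_true (m : ℕ) (h : m < N) (hv : v m = true) :
    ht v N (m + 1) = ht v N m + 1 := by
  simp [ht, aa_succ, bb_succ, h, hv]
  ring

lemma ht_succ_false (m : ℕ) (h : m < N) (hv : v m = false) :
    ht v N (m + 1) = ht v N m - 1 := by
  simp [ht, aa_succ, bb_succ, h, hv]
  ring

lemma ht_succ_ge (m : ℕ) (h : N ≤ m) : ht v N (m + 1) = ht v N m := by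
  have : ¬ m < N := by omega
  simp [ht, aa_succ, bb_succ, this]

/-- step analysis : if height increases, it is an opener step -/
lemma step_up (m : ℕ) (h : ht v N m < ht v N (m + 1)) :
    m < N ∧ v m = true ∧ ht v N (m + 1) = ht v N m + 1 := by
  by_cases hm : m < N
  · cases hv : v m with
    | true => exact ⟨hm, rfl, ht_succ_true v N m hm hv⟩
    | false => rw [ht_succ_false v N m hm hv] at h; omega
  · rw [ht_succ_ge v N m (by omega)] at h; omega

lemma step_down (m : ℕ) (h : ht v N (m + 1) < ht v N m) :
    m < N ∧ v m = false ∧ ht v N (m + 1) = ht v N m - 1 := by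
  by_cases hm : m < N
  · cases hv : v m with
    | true => rw [ht_succ_true v N m hm hv] at h; omega
    | false => exact ⟨hm, rfl, ht_succ_false v N m hm hv⟩
  · rw [ht_succ_ge v N m (by omega)] at h; omega

lemma aa_stab (m : ℕ) (h : N ≤ m) : aa v N m = aa v N N := by
  unfold aa
  congr 1
  ext i
  simp only [Finset.mem_filter, Finset.mem_range]
  constructor
  · rintro ⟨h1, h2, h3⟩; exact ⟨h2, h2, h3⟩
  · rintro ⟨h1, h2, h3⟩; exact ⟨by omega, h2, h3⟩

lemma bb_stab (m : ℕ) (h : N ≤ m) : bb v N m = bb v N N := by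
  unfold bb
  congr 1
  ext i
  simp only [Finset.mem_filter, Finset.mem_range]
  constructor
  · rintro ⟨h1, h2, h3⟩; exact ⟨h2, h2, h3⟩
  · rintro ⟨h1, h2, h3⟩; exact ⟨by omega, h2, h3⟩

lemma aa_congr (w : ℕ → Bool) (hvw : ∀ i < N, v i = w i) (m : ℕ) :
    aa v N m = aa w N m := by
  unfold aa
  congr 1
  apply Finset.filter_congr
  intro i _
  constructor
  · rintro ⟨h1, h2⟩; exact ⟨h1, (hvw i h1) ▸ h2⟩
  · rintro ⟨h1, h2⟩; exact ⟨h1, (hvw i h1) ▸ h2⟩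

lemma bb_congr (w : ℕ → Bool) (hvw : ∀ i < N, v i = w i) (m : ℕ) :
    bb v N m = bb w N m := by
  unfold bb
  congr 1
  apply Finset.filter_congr
  intro i _
  constructor
  · rintro ⟨h1, h2⟩; exact ⟨h1, (hvw i h1) ▸ h2⟩
  · rintro ⟨h1, h2⟩; exact ⟨h1, (hvw i h1) ▸ h2⟩


def opener (i : ℕ) : Prop := i < N ∧ v i = true
def closer (j : ℕ) : Prop := j < N ∧ v j = false

/-- partner of a closer -/
noncomputable def pf (j : ℕ) : ℕ :=
  if h : ((Finset.range j).filter (fun i => ht v N i < ht v N j)).Nonempty then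
    ((Finset.range j).filter (fun i => ht v N i < ht v N j)).max' h
  else 0

/-- partner of an opener -/
noncomputable def qf (i : ℕ) : ℕ :=
  if h : ((Finset.range N).filter (fun j => i < j ∧ ht v N (j + 1) ≤ ht v N i)).Nonempty then
    ((Finset.range N).filter (fun j => i < j ∧ ht v N (j + 1) ≤ ht v N i)).min' h
  else 0

section pairing

variable (hpre : ∀ m, bb v N m ≤ aa v N m) (hbal : aa v N N = bb v N N)
include hpre

lemma ht_nonneg (m : ℕ) : 0 ≤ ht v N m := by
  have := hpre m; unfold ht; omega

omit hpre in
include hbal in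
lemma ht_N : ht v N N = 0 := by unfold ht; omega

lemma closer_ht_pos {j : ℕ} (hj : closer v N j) : 1 ≤ ht v N j := by
  have h1 := ht_succ_false v N j hj.1 hj.2
  have h2 := ht_nonneg v N hpre (j + 1)
  omega

lemma closer_pos {j : ℕ} (hj : closer v N j) : 0 < j := by
  rcases Nat.eq_zero_or_pos j with h | h
  · have := closer_ht_pos v N hpre hj
    rw [h, ht_zero] at this; omega
  · exact h

lemma pset_nonempty {j : ℕ} (hj : closer v N j) :
    ((Finset.range j).filter (fun i => ht v N i < ht v N j)).Nonempty := by
  refine ⟨0, Finset.mem_filter.2 ⟨Finset.mem_range.2 (closer_pos v N hpre hj), ?_⟩⟩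
  rw [ht_zero]
  exact closer_ht_pos v N hpre hj

section pside
variable {j : ℕ} (hj : closer v N j)
include hj

lemma pf_mem : pf v N j ∈ (Finset.range j).filter (fun i => ht v N i < ht v N j) := by
  rw [pf, dif_pos (pset_nonempty v N hpre hj)]; exact Finset.max'_mem _ _

lemma pf_lt : pf v N j < j := Finset.mem_range.1 (Finset.mem_filter.1 (pf_mem v N hpre hj)).1

lemma pf_ht_lt : ht v N (pf v N j) < ht v N j := (Finset.mem_filter.1 (pf_mem v N hpre hj)).2

lemma pf_max {k : ℕ} (h1 : pf v N j < k) (h2 : k < j) : ht v N j ≤ ht v N k := by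
  by_contra h
  have hk : k ∈ (Finset.range j).filter (fun i => ht v N i < ht v N j) :=
    Finset.mem_filter.2 ⟨Finset.mem_range.2 h2, by omega⟩
  have := Finset.le_max' _ k hk
  rw [pf, dif_pos (pset_nonempty v N hpre hj)] at h1
  omega

lemma pf_interval {k : ℕ} (h1 : pf v N j < k) (h2 : k ≤ j) : ht v N j ≤ ht v N k := by
  rcases eq_or_lt_of_le h2 with rfl | h2
  · exact le_refl _
  · exact pf_max v N hpre hj h1 h2

lemma pf_spec : opener v N (pf v N j) ∧ ht v N (pf v N j) = ht v N j - 1 := by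
  have h1 : ht v N (pf v N j) < ht v N j := pf_ht_lt v N hpre hj
  have h2 : ht v N j ≤ ht v N (pf v N j + 1) :=
    pf_interval v N hpre hj (Nat.lt_succ_self _) (pf_lt v N hpre hj)
  have := step_up v N (pf v N j) (by omega)
  exact ⟨⟨this.1, this.2.1⟩, by omega⟩


end pside

section qside
variable {i : ℕ} (hi : opener v N i)
include hbal hi

lemma opener_succ_lt : i + 1 < N := by
  rcases Nat.lt_or_ge (i + 1) N with h | h
  · exact h
  · exfalso
    have hiN := hi.1
    have h1 : i + 1 = N := by omega
    have h2 := ht_succ_true v N i hi.1 hi.2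
    have h3 := ht_N v N hbal
    have h4 := ht_nonneg v N hpre i
    rw [h1] at h2; omega

lemma qset_nonempty :
    ((Finset.range N).filter (fun j => i < j ∧ ht v N (j + 1) ≤ ht v N i)).Nonempty := by
  have hN := opener_succ_lt v N hpre hbal hi
  refine ⟨N - 1, Finset.mem_filter.2 ⟨Finset.mem_range.2 (by omega), by omega, ?_⟩⟩
  have : N - 1 + 1 = N := by omega
  rw [this, ht_N v N hbal]
  exact ht_nonneg v N hpre i

lemma qf_mem : qf v N i ∈ (Finset.range N).filter
    (fun j => i < j ∧ ht v N (j + 1) ≤ ht v N i) := by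
  rw [qf, dif_pos (qset_nonempty v N hpre hbal hi)]; exact Finset.min'_mem _ _

lemma qf_lt_N : qf v N i < N :=
  Finset.mem_range.1 (Finset.mem_filter.1 (qf_mem v N hpre hbal hi)).1

lemma qf_gt : i < qf v N i := (Finset.mem_filter.1 (qf_mem v N hpre hbal hi)).2.1

lemma qf_ht_le : ht v N (qf v N i + 1) ≤ ht v N i :=
  (Finset.mem_filter.1 (qf_mem v N hpre hbal hi)).2.2

lemma qf_min {k : ℕ} (h1 : i < k) (h2 : k < qf v N i) : ht v N i < ht v N (k + 1) := by
  by_contra h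
  have hk : k ∈ (Finset.range N).filter (fun j => i < j ∧ ht v N (j + 1) ≤ ht v N i) :=
    Finset.mem_filter.2 ⟨Finset.mem_range.2 (by
      have := qf_lt_N v N hpre hbal hi; omega), h1, by omega⟩
  have := Finset.min'_le _ k hk
  rw [qf, dif_pos (qset_nonempty v N hpre hbal hi)] at h2
  omega

lemma qf_interval {m : ℕ} (h1 : i < m) (h2 : m ≤ qf v N i) : ht v N i < ht v N m := by
  obtain ⟨k, rfl⟩ : ∃ k, m = k + 1 := ⟨m - 1, by omega⟩
  rcases Nat.lt_or_ge i k with h | h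
  · exact qf_min v N hpre hbal hi h (by omega)
  · have : k = i := by omega
    subst this
    rw [ht_succ_true v N k hi.1 hi.2]; omega

lemma qf_spec : closer v N (qf v N i) ∧ ht v N (qf v N i) = ht v N i + 1 ∧
    ht v N (qf v N i + 1) = ht v N i := by
  have h1 := qf_ht_le v N hpre hbal hi
  have h2 : ht v N i < ht v N (qf v N i) :=
    qf_interval v N hpre hbal hi (qf_gt v N hpre hbal hi) (le_refl _)
  have := step_down v N (qf v N i) (by omega)
  exact ⟨⟨this.1, this.2.1⟩, by omega, by omega⟩

/-- p ∘ q = id on openers -/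
lemma pf_qf : pf v N (qf v N i) = i := by
  have hq := qf_spec v N hpre hbal hi
  have hne := pset_nonempty v N hpre hq.1
  rw [pf, dif_pos hne]
  apply _root_.le_antisymm
  · by_contra h
    push_neg at h
    have hmem := Finset.max'_mem _ hne
    set x := (Finset.range (qf v N i)).filter
      (fun k => ht v N k < ht v N (qf v N i)) |>.max' hne with hx
    rw [Finset.mem_filter, Finset.mem_range] at hmem
    have := qf_interval v N hpre hbal hi h (by omega)
    omega
  · apply Finset.le_max'
    rw [Finset.mem_filter, Finset.mem_range]
    exact ⟨qf_gt v N hpre hbal hi, by have := hq.2.1; omega⟩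

end qside

end pairing

/-- q ∘ p = id on closers -/
lemma qf_pf {j : ℕ} (hpre : ∀ m, bb v N m ≤ aa v N m) (hbal : aa v N N = bb v N N)
    (hj : closer v N j) : qf v N (pf v N j) = j := by
  have hp := pf_spec v N hpre hj
  have hplt := pf_lt v N hpre hj
  have hne := qset_nonempty v N hpre hbal hp.1
  rw [qf, dif_pos hne]
  apply _root_.le_antisymm
  · apply Finset.min'_le
    rw [Finset.mem_filter, Finset.mem_range]
    refine ⟨hj.1, hplt, ?_⟩
    rw [ht_succ_false v N j hj.1 hj.2]
    omega
  · by_contra h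
    push_neg at h
    have hmem := Finset.min'_mem _ hne
    set x := ((Finset.range N).filter
      (fun k => pf v N j < k ∧ ht v N (k + 1) ≤ ht v N (pf v N j))).min' hne with hx
    rw [Finset.mem_filter, Finset.mem_range] at hmem
    -- x < j, pf j < x, ht (x+1) ≤ ht (pf j) = ht j - 1 < ht j
    -- x + 1 ≤ j; if x + 1 = j then ht j ≤ ht j - 1 contradiction via pf_interval at x+1? 
    have hint : ht v N j ≤ ht v N (x + 1) :=
      pf_interval v N hpre hj (by omega) (by omega)
    omega


/-! ### From Dyck-step lists to walks -/

/-- opener-indicator of a list -/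
def lv (l : List DyckStep) : ℕ → Bool := fun i => decide (l.getD i D = U)

lemma count_take (l : List DyckStep) (m : ℕ) :
    ((l.take m).count U = aa (lv l) l.length m) ∧
    ((l.take m).count D = bb (lv l) l.length m) := by
  induction m with
  | zero => simp [aa, bb]
  | succ m ih =>
    rcases Nat.lt_or_ge m l.length with h | h
    · rw [List.take_succ]
      have hg : l[m]? = some l[m] := List.getElem?_eq_getElem h
      have hgd : l.getD m D = l[m] := by
        rw [List.getD_eq_getElem?_getD, hg]; rfl
      rw [hg]
      rw [aa_succ, bb_succ]
      rcases (l[m]).dichotomy with hU | hU <;>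
      · rw [List.count_append, List.count_append]
        have hlv : lv l m = (decide (l[m] = U)) := by rw [lv, hgd]
        simp [hU, hlv, ih.1, ih.2, h]
    · have h1 : l.take (m+1) = l.take m := by
        rw [List.take_of_length_le (by omega), List.take_of_length_le (by omega)]
      have h2 : ¬ m < l.length := by omega
      rw [h1, aa_succ, bb_succ]
      simp [h2, ih.1, ih.2]

lemma count_full (l : List DyckStep) :
    l.count U = aa (lv l) l.length l.length ∧ l.count D = bb (lv l) l.length l.length := by
  have := count_take l l.length
  rwa [List.take_length] at this


/-! ### Matchings -/

section matching
variable {N : ℕ} (P : Finset (Finset (Fin N)))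
  (h1 : ∀ i : Fin N, ∃! p, p ∈ P ∧ i ∈ p)
  (h2 : ∀ p ∈ P, p.card = 2)

/-- the block containing `i` -/
noncomputable def blk (i : Fin N) : Finset (Fin N) := (h1 i).exists.choose

lemma blk_mem (i : Fin N) : blk P h1 i ∈ P := (h1 i).exists.choose_spec.1
lemma mem_blk (i : Fin N) : i ∈ blk P h1 i := (h1 i).exists.choose_spec.2
lemma blk_unique {i : Fin N} {p : Finset (Fin N)} (hp : p ∈ P) (hip : i ∈ p) :
    p = blk P h1 i := (h1 i).unique ⟨hp, hip⟩ ⟨blk_mem P h1 i, mem_blk P h1 i⟩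

include h2 in
lemma exists_partner (i : Fin N) : ∃ j, j ≠ i ∧ blk P h1 i = {i, j} := by
  obtain ⟨a, b, hab, hpair⟩ := Finset.card_eq_two.1 (h2 _ (blk_mem P h1 i))
  have hi := mem_blk P h1 i
  rw [hpair] at hi
  rcases Finset.mem_insert.1 hi with rfl | hb
  · exact ⟨b, hab.symm, hpair⟩
  · rw [Finset.mem_singleton] at hb
    subst hb
    exact ⟨a, hab, by rw [hpair, Finset.pair_comm]⟩

/-- the element matched with `i` -/
noncomputable def partner (i : Fin N) : Fin N := (exists_partner P h1 h2 i).choose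

lemma partner_ne (i : Fin N) : partner P h1 h2 i ≠ i :=
  (exists_partner P h1 h2 i).choose_spec.1

lemma blk_eq_pair (i : Fin N) : blk P h1 i = {i, partner P h1 h2 i} :=
  (exists_partner P h1 h2 i).choose_spec.2

lemma partner_mem_blk (i : Fin N) : partner P h1 h2 i ∈ blk P h1 i := by
  rw [blk_eq_pair P h1 h2]; simp

lemma blk_partner_eq (i : Fin N) : blk P h1 (partner P h1 h2 i) = blk P h1 i :=
  (blk_unique P h1 (blk_mem P h1 i) (partner_mem_blk P h1 h2 i)).symm

lemma partner_partner (i : Fin N) : partner P h1 h2 (partner P h1 h2 i) = i := by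
  have h := blk_eq_pair P h1 h2 (partner P h1 h2 i)
  rw [blk_partner_eq P h1 h2 i, blk_eq_pair P h1 h2 i] at h
  have : partner P h1 h2 (partner P h1 h2 i) ∈
      ({i, partner P h1 h2 i} : Finset (Fin N)) := by
    rw [h]; simp
  rcases Finset.mem_insert.1 this with h' | h'
  · exact h'
  · rw [Finset.mem_singleton] at h'
    exact absurd h' (partner_ne P h1 h2 _)

lemma partner_inj {i j : Fin N} (h : partner P h1 h2 i = partner P h1 h2 j) : i = j := by
  have := congrArg (partner P h1 h2) h
  rwa [partner_partner, partner_partner] at this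

lemma mem_eq_pair {i : Fin N} {p : Finset (Fin N)} (hp : p ∈ P) (hip : i ∈ p) :
    p = {i, partner P h1 h2 i} := by
  rw [blk_unique P h1 hp hip, blk_eq_pair]

/-- opener-indicator from a matching -/
noncomputable def vm : ℕ → Bool := fun m =>
  if h : m < N then decide ((⟨m, h⟩ : Fin N) < partner P h1 h2 ⟨m, h⟩) else false

lemma vm_true_iff (i : Fin N) : vm P h1 h2 i.val = true ↔ i < partner P h1 h2 i := by
  rw [vm, dif_pos i.isLt]
  simp

lemma vm_false_iff (i : Fin N) : vm P h1 h2 i.val = false ↔ partner P h1 h2 i < i := by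
  rw [vm, dif_pos i.isLt]
  simp only [decide_eq_false_iff_not, not_lt, Fin.eta]
  constructor
  · intro h
    exact lt_of_le_of_ne h (partner_ne P h1 h2 i)
  · exact le_of_lt

lemma vm_pre (m : ℕ) : bb (vm P h1 h2) N m ≤ aa (vm P h1 h2) N m := by
  apply Finset.card_le_card_of_injOn
    (fun k => if h : k < N then (partner P h1 h2 ⟨k, h⟩).val else 0)
  · intro k hk
    simp only [Finset.mem_coe, Finset.mem_filter, Finset.mem_range] at hk ⊢
    obtain ⟨hkm, hkN, hkv⟩ := hk
    have hc : partner P h1 h2 ⟨k, hkN⟩ < ⟨k, hkN⟩ := (vm_false_iff P h1 h2 ⟨k, hkN⟩).1 hkv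
    rw [dif_pos hkN]
    have hlt : (partner P h1 h2 ⟨k, hkN⟩).val < k := hc
    refine ⟨by omega, (partner P h1 h2 ⟨k, hkN⟩).isLt, ?_⟩
    rw [(by simp : (partner P h1 h2 ⟨k, hkN⟩).val = (partner P h1 h2 ⟨k, hkN⟩ : Fin N).val),
      vm_true_iff]
    rw [partner_partner]
    exact hc
  · intro k1 hk1 k2 hk2 he
    simp only [Finset.mem_coe, Finset.mem_filter, Finset.mem_range] at hk1 hk2
    simp only [] at he
    rw [dif_pos hk1.2.1, dif_pos hk2.2.1] at he
    have : partner P h1 h2 ⟨k1, hk1.2.1⟩ = partner P h1 h2 ⟨k2, hk2.2.1⟩ := Fin.ext he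
    have := partner_inj P h1 h2 this
    exact congrArg Fin.val this

lemma vm_bal : aa (vm P h1 h2) N N = bb (vm P h1 h2) N N := by
  apply _root_.le_antisymm
  · apply Finset.card_le_card_of_injOn
      (fun k => if h : k < N then (partner P h1 h2 ⟨k, h⟩).val else 0)
    · intro k hk
      simp only [Finset.mem_coe, Finset.mem_filter, Finset.mem_range] at hk ⊢
      obtain ⟨hkm, hkN, hkv⟩ := hk
      have hc : (⟨k, hkN⟩ : Fin N) < partner P h1 h2 ⟨k, hkN⟩ :=
        (vm_true_iff P h1 h2 ⟨k, hkN⟩).1 hkv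
      rw [dif_pos hkN]
      refine ⟨(partner P h1 h2 ⟨k, hkN⟩).isLt, (partner P h1 h2 ⟨k, hkN⟩).isLt, ?_⟩
      rw [(by simp : (partner P h1 h2 ⟨k, hkN⟩).val = (partner P h1 h2 ⟨k, hkN⟩ : Fin N).val),
        vm_false_iff]
      rw [partner_partner]
      exact hc
    · intro k1 hk1 k2 hk2 he
      simp only [Finset.mem_coe, Finset.mem_filter, Finset.mem_range] at hk1 hk2
      simp only [] at he
      rw [dif_pos hk1.2.1, dif_pos hk2.2.1] at he
      have : partner P h1 h2 ⟨k1, hk1.2.1⟩ = partner P h1 h2 ⟨k2, hk2.2.1⟩ := Fin.ext he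
      have := partner_inj P h1 h2 this
      exact congrArg Fin.val this
  · exact vm_pre P h1 h2 N


section noncross
variable (h3 : ¬∃ a b c d : Fin N, a < b ∧ b < c ∧ c < d ∧
    (∃ p ∈ P, a ∈ p ∧ c ∈ p) ∧ (∃ q ∈ P, b ∈ q ∧ d ∈ q))
include h3

lemma nocross' {a b c d : Fin N} (hab : a < b) (hbc : b < c) (hcd : c < d)
    (hac : partner P h1 h2 a = c) (hbd : partner P h1 h2 b = d) : False := by
  apply h3
  refine ⟨a, b, c, d, hab, hbc, hcd, ⟨blk P h1 a, blk_mem P h1 a, mem_blk P h1 a, ?_⟩,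
    ⟨blk P h1 b, blk_mem P h1 b, mem_blk P h1 b, ?_⟩⟩
  · rw [← hac]; exact partner_mem_blk P h1 h2 a
  · rw [← hbd]; exact partner_mem_blk P h1 h2 b

lemma nesting {i k : Fin N} (hik : i < k) (hki : k < partner P h1 h2 i) :
    i < partner P h1 h2 k ∧ partner P h1 h2 k < partner P h1 h2 i := by
  have hkne : partner P h1 h2 k ≠ i := by
    intro h
    have := congrArg (partner P h1 h2) h
    rw [partner_partner] at this
    rw [this] at hki
    exact absurd hki (lt_irrefl _)
  have hkne2 : partner P h1 h2 k ≠ partner P h1 h2 i := fun h =>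
    absurd (partner_inj P h1 h2 h ▸ hik) (by intro hh; rw [partner_inj P h1 h2 h] at hik; exact lt_irrefl _ hik)
  rcases lt_trichotomy (partner P h1 h2 k) i with h | h | h
  · exact absurd (nocross' P h1 h2 h3 h hik hki (partner_partner P h1 h2 k) rfl) id
  · exact absurd h hkne
  · refine ⟨h, ?_⟩
    rcases lt_trichotomy (partner P h1 h2 k) (partner P h1 h2 i) with h' | h' | h'
    · exact h'
    · exact absurd h' hkne2
    · exact absurd (nocross' P h1 h2 h3 hik hki h' rfl rfl) id

end noncross
end matching

/-- total count lemma -/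
lemma aa_add_bb (v : ℕ → Bool) (N : ℕ) : aa v N N + bb v N N = N := by
  unfold aa bb
  rw [(Finset.filter_congr (fun i hi => by
      simp only [Finset.mem_range] at hi
      simp [hi] : ∀ i ∈ Finset.range N, (i < N ∧ v i = true) ↔ (v i = true))),
    (Finset.filter_congr (fun i hi => by
      simp only [Finset.mem_range] at hi
      simp [hi] : ∀ i ∈ Finset.range N, (i < N ∧ v i = false) ↔ ¬(v i = true)))]
  rw [Finset.card_filter_add_card_filter_not]
  exact Finset.card_range N

section word
variable {N : ℕ} (P : Finset (Finset (Fin N)))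
  (h1 : ∀ i : Fin N, ∃! p, p ∈ P ∧ i ∈ p)
  (h2 : ∀ p ∈ P, p.card = 2)

/-- the word of a matching -/
noncomputable def wordm : List DyckStep :=
  List.ofFn (fun i : Fin N => if i < partner P h1 h2 i then U else D)

lemma length_wordm : (wordm P h1 h2).length = N := by simp [wordm]

lemma getElem_wordm (i : ℕ) (h : i < N) (h' : i < (wordm P h1 h2).length) :
    (wordm P h1 h2)[i] =
      if (⟨i, h⟩ : Fin N) < partner P h1 h2 ⟨i, h⟩ then U else D := by
  simp [wordm]

lemma lv_wordm (i : ℕ) (hi : i < N) : lv (wordm P h1 h2) i = vm P h1 h2 i := by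
  have h' : i < (wordm P h1 h2).length := by rw [length_wordm]; exact hi
  rw [lv, vm, dif_pos hi]
  rw [List.getD_eq_getElem?_getD, List.getElem?_eq_getElem h', Option.getD_some]
  rw [getElem_wordm P h1 h2 i hi h']
  by_cases hlt : (⟨i, hi⟩ : Fin N) < partner P h1 h2 ⟨i, hi⟩ <;> simp [hlt]

lemma aa_wordm (m : ℕ) :
    aa (lv (wordm P h1 h2)) (wordm P h1 h2).length m = aa (vm P h1 h2) N m := by
  rw [length_wordm]
  exact aa_congr _ N _ (lv_wordm P h1 h2) m

lemma bb_wordm (m : ℕ) :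
    bb (lv (wordm P h1 h2)) (wordm P h1 h2).length m = bb (vm P h1 h2) N m := by
  rw [length_wordm]
  exact bb_congr _ N _ (lv_wordm P h1 h2) m

/-- the Dyck word of a matching -/
noncomputable def dyckOf : DyckWord where
  toList := wordm P h1 h2
  count_U_eq_count_D := by
    have hU := (count_full (wordm P h1 h2)).1
    have hD := (count_full (wordm P h1 h2)).2
    rw [hU, hD, aa_wordm, bb_wordm, length_wordm]
    exact vm_bal P h1 h2
  count_D_le_count_U i := by
    have hU := (count_take (wordm P h1 h2) i).1
    have hD := (count_take (wordm P h1 h2) i).2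
    rw [hU, hD, aa_wordm, bb_wordm]
    exact vm_pre P h1 h2 i

lemma semilength_dyckOf (n : ℕ) (hN : N = 2 * n) : (dyckOf P h1 h2).semilength = n := by
  have h2l := (dyckOf P h1 h2).two_mul_semilength_eq_length
  have : (dyckOf P h1 h2).toList.length = N := length_wordm P h1 h2
  omega

end word

/-! ### Injectivity -/

section inj
variable {N : ℕ} (P Q : Finset (Finset (Fin N)))
  (h1P : ∀ i : Fin N, ∃! p, p ∈ P ∧ i ∈ p) (h2P : ∀ p ∈ P, p.card = 2)
  (h1Q : ∀ i : Fin N, ∃! p, p ∈ Q ∧ i ∈ p) (h2Q : ∀ p ∈ Q, p.card = 2)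
  (hword : wordm P h1P h2P = wordm Q h1Q h2Q)
include hword

lemma vm_transfer (i : Fin N) : vm P h1P h2P i.val = vm Q h1Q h2Q i.val := by
  have hP := lv_wordm P h1P h2P i.val i.isLt
  have hQ := lv_wordm Q h1Q h2Q i.val i.isLt
  rw [hword] at hP
  rw [← hP, ← hQ]

lemma opener_transfer (i : Fin N) :
    i < partner P h1P h2P i ↔ i < partner Q h1Q h2Q i := by
  rw [← vm_true_iff P h1P h2P i, ← vm_true_iff Q h1Q h2Q i,
    vm_transfer P Q h1P h2P h1Q h2Q hword i]

lemma closer_transfer (i : Fin N) :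
    partner P h1P h2P i < i ↔ partner Q h1Q h2Q i < i := by
  rw [← vm_false_iff P h1P h2P i, ← vm_false_iff Q h1Q h2Q i,
    vm_transfer P Q h1P h2P h1Q h2Q hword i]

variable
  (h3P : ¬∃ a b c d : Fin N, a < b ∧ b < c ∧ c < d ∧
    (∃ p ∈ P, a ∈ p ∧ c ∈ p) ∧ (∃ q ∈ P, b ∈ q ∧ d ∈ q))
  (h3Q : ¬∃ a b c d : Fin N, a < b ∧ b < c ∧ c < d ∧
    (∃ p ∈ Q, a ∈ p ∧ c ∈ p) ∧ (∃ q ∈ Q, b ∈ q ∧ d ∈ q))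
include h3P h3Q

lemma partner_eq_of_word_eq :
    ∀ m (j : Fin N), j.val < m → partner P h1P h2P j < j →
      partner P h1P h2P j = partner Q h1Q h2Q j := by
  intro m
  induction m with
  | zero => exact fun j hj => absurd hj (Nat.not_lt_zero _)
  | succ m IH =>
    intro j hjm hcl
    have hclQ : partner Q h1Q h2Q j < j :=
      (closer_transfer P Q h1P h2P h1Q h2Q hword j).1 hcl
    set i := partner P h1P h2P j with hidef
    set i' := partner Q h1Q h2Q j with hi'def
    have hPi : partner P h1P h2P i = j := by rw [hidef, partner_partner]
    have hQi' : partner Q h1Q h2Q i' = j := by rw [hi'def, partner_partner]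
    rcases lt_trichotomy i i' with hlt | heq | hgt
    · -- i < i' < j
      have hoQ : i' < partner Q h1Q h2Q i' := by rw [hQi']; exact hclQ
      have hoP : i' < partner P h1P h2P i' :=
        (opener_transfer P Q h1P h2P h1Q h2Q hword i').2 hoQ
      have hnest := nesting P h1P h2P h3P hlt (by rw [hPi]; exact hclQ)
      set k := partner P h1P h2P i' with hkdef
      have hkj : k < j := by rw [← hPi]; exact hnest.2
      have hkcl : partner P h1P h2P k < k := by
        rw [hkdef, partner_partner]; exact hoP
      have hkm : k.val < m := by
        have : k.val < j.val := hkj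
        omega
      have hPQ := IH k hkm hkcl
      have : partner Q h1Q h2Q k = i' := by
        rw [← hPQ, hkdef, partner_partner]
      have : partner Q h1Q h2Q i' = k := by rw [← this, partner_partner]
      rw [hQi'] at this
      exact absurd this.symm (ne_of_lt hkj)
    · exact heq
    · -- i' < i < j
      have hoP : i < partner P h1P h2P i := by rw [hPi]; exact hcl
      have hoQ : i < partner Q h1Q h2Q i :=
        (opener_transfer P Q h1P h2P h1Q h2Q hword i).1 hoP
      have hnest := nesting Q h1Q h2Q h3Q hgt (by rw [hQi']; exact hcl)
      set k := partner Q h1Q h2Q i with hkdef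
      have hkj : k < j := by rw [← hQi']; exact hnest.2
      have hkclQ : partner Q h1Q h2Q k < k := by
        rw [hkdef, partner_partner]; exact hoQ
      have hkcl : partner P h1P h2P k < k :=
        (closer_transfer P Q h1P h2P h1Q h2Q hword k).2 hkclQ
      have hkm : k.val < m := by
        have : k.val < j.val := hkj
        omega
      have hPQ := IH k hkm hkcl
      have h5 : partner P h1P h2P k = i := by rw [hPQ, hkdef, partner_partner]
      have : partner P h1P h2P i = k := by rw [← h5, partner_partner]
      rw [hPi] at this
      exact absurd this.symm (ne_of_lt hkj)

lemma subset_of_word_eq : P ⊆ Q := by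
  intro p hp
  have hcard := h2P p hp
  obtain ⟨i, hi⟩ := Finset.card_pos.1 (by rw [hcard]; omega)
  have hpair : p = {i, partner P h1P h2P i} := mem_eq_pair P h1P h2P hp hi
  -- pick the closer element
  obtain ⟨c, hccl, hcp⟩ : ∃ c : Fin N, partner P h1P h2P c < c ∧
      p = {c, partner P h1P h2P c} := by
    rcases lt_trichotomy (partner P h1P h2P i) i with h | h | h
    · exact ⟨i, h, hpair⟩
    · exact absurd h (partner_ne P h1P h2P i)
    · refine ⟨partner P h1P h2P i, ?_, ?_⟩
      · rw [partner_partner]; exact h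
      · rw [partner_partner, Finset.pair_comm]; exact hpair
  have hkey := partner_eq_of_word_eq P Q h1P h2P h1Q h2Q hword h3P h3Q N c c.isLt hccl
  rw [hcp, hkey, ← blk_eq_pair Q h1Q h2Q c]
  exact blk_mem Q h1Q c

end inj
/-! ### Construction of a matching from a walk -/

section constr
variable (v : ℕ → Bool) (N : ℕ)
  (hpre : ∀ m, bb v N m ≤ aa v N m) (hbal : aa v N N = bb v N N)

/-- the matching function built from a balanced walk -/
noncomputable def gf (i : Fin N) : Fin N :=
  if h : v i.val = true then ⟨qf v N i.val, qf_lt_N v N hpre hbal ⟨i.isLt, h⟩⟩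
  else ⟨pf v N i.val,
    lt_trans (pf_lt v N hpre ⟨i.isLt, Bool.eq_false_iff.mpr h⟩) i.isLt⟩

lemma gf_open {i : Fin N} (h : v i.val = true) :
    (gf v N hpre hbal i).val = qf v N i.val := by
  rw [gf, dif_pos h]

lemma gf_close {i : Fin N} (h : v i.val = false) :
    (gf v N hpre hbal i).val = pf v N i.val := by
  rw [gf, dif_neg (by rw [h]; exact Bool.false_ne_true)]

lemma gf_lt_open {i : Fin N} (h : v i.val = true) : i < gf v N hpre hbal i := by
  have h1 := gf_open v N hpre hbal h
  have h2 := qf_gt v N hpre hbal (⟨i.isLt, h⟩ : opener v N i.val)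
  rw [Fin.lt_def, h1]
  exact h2

lemma gf_gt_close {i : Fin N} (h : v i.val = false) : gf v N hpre hbal i < i := by
  have h1 := gf_close v N hpre hbal h
  have h2 := pf_lt v N hpre (⟨i.isLt, h⟩ : closer v N i.val)
  rw [Fin.lt_def, h1]
  exact h2

lemma gf_lt_iff (i : Fin N) : i < gf v N hpre hbal i ↔ v i.val = true := by
  constructor
  · intro hlt
    cases hv : v i.val with
    | true => rfl
    | false => exact absurd (lt_trans hlt (gf_gt_close v N hpre hbal hv)) (lt_irrefl _)
  · exact gf_lt_open v N hpre hbal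

lemma gf_invol (i : Fin N) : gf v N hpre hbal (gf v N hpre hbal i) = i := by
  cases hv : v i.val with
  | true =>
    have hq := qf_spec v N hpre hbal (⟨i.isLt, hv⟩ : opener v N i.val)
    have h1 : (gf v N hpre hbal i).val = qf v N i.val := gf_open v N hpre hbal hv
    have hc : v (gf v N hpre hbal i).val = false := by rw [h1]; exact hq.1.2
    apply Fin.ext
    rw [gf_close v N hpre hbal hc, h1, pf_qf v N hpre hbal ⟨i.isLt, hv⟩]
  | false =>
    have hp := pf_spec v N hpre (⟨i.isLt, hv⟩ : closer v N i.val)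
    have h1 : (gf v N hpre hbal i).val = pf v N i.val := gf_close v N hpre hbal hv
    have ho : v (gf v N hpre hbal i).val = true := by rw [h1]; exact hp.1.2
    apply Fin.ext
    rw [gf_open v N hpre hbal ho, h1, qf_pf v N hpre hbal ⟨i.isLt, hv⟩]

lemma gf_ne (i : Fin N) : gf v N hpre hbal i ≠ i := by
  cases hv : v i.val with
  | true => exact ne_of_gt (gf_lt_open v N hpre hbal hv)
  | false => exact ne_of_lt (gf_gt_close v N hpre hbal hv)

/-- the matching built from a balanced walk -/
noncomputable def Pm : Finset (Finset (Fin N)) :=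
  Finset.image (fun i => ({i, gf v N hpre hbal i} : Finset (Fin N))) Finset.univ

lemma Pm_h1 : ∀ i : Fin N, ∃! p, p ∈ Pm v N hpre hbal ∧ i ∈ p := by
  intro i
  refine ⟨{i, gf v N hpre hbal i},
    ⟨Finset.mem_image.2 ⟨i, Finset.mem_univ i, rfl⟩, by simp⟩, ?_⟩
  rintro p ⟨hp, hip⟩
  obtain ⟨x, -, rfl⟩ := Finset.mem_image.1 hp
  rcases Finset.mem_insert.1 hip with rfl | hx
  · rfl
  · rw [Finset.mem_singleton] at hx
    subst hx
    rw [gf_invol, Finset.pair_comm]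

lemma Pm_h2 : ∀ p ∈ Pm v N hpre hbal, p.card = 2 := by
  intro p hp
  obtain ⟨x, -, rfl⟩ := Finset.mem_image.1 hp
  exact Finset.card_pair (Ne.symm (gf_ne v N hpre hbal x))

lemma Pm_partner (i : Fin N) :
    partner (Pm v N hpre hbal) (Pm_h1 v N hpre hbal) (Pm_h2 v N hpre hbal) i =
      gf v N hpre hbal i := by
  have hmem : ({i, gf v N hpre hbal i} : Finset (Fin N)) ∈ Pm v N hpre hbal :=
    Finset.mem_image.2 ⟨i, Finset.mem_univ i, rfl⟩
  have heq := mem_eq_pair (Pm v N hpre hbal) (Pm_h1 v N hpre hbal) (Pm_h2 v N hpre hbal)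
    hmem (by simp : i ∈ ({i, gf v N hpre hbal i} : Finset (Fin N)))
  have hmem2 : gf v N hpre hbal i ∈
      ({i, partner (Pm v N hpre hbal) (Pm_h1 v N hpre hbal) (Pm_h2 v N hpre hbal) i} :
        Finset (Fin N)) := by
    rw [← heq]; simp
  rcases Finset.mem_insert.1 hmem2 with h | h
  · exact absurd h (gf_ne v N hpre hbal i)
  · exact (Finset.mem_singleton.1 h).symm

lemma Pm_h3 : ¬∃ a b c d : Fin N, a < b ∧ b < c ∧ c < d ∧
    (∃ p ∈ Pm v N hpre hbal, a ∈ p ∧ c ∈ p) ∧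
    (∃ q ∈ Pm v N hpre hbal, b ∈ q ∧ d ∈ q) := by
  rintro ⟨a, b, c, d, hab, hbc, hcd, ⟨p, hp, hap, hcp⟩, ⟨q, hq, hbq, hdq⟩⟩
  have hpa := mem_eq_pair (Pm v N hpre hbal) (Pm_h1 v N hpre hbal) (Pm_h2 v N hpre hbal) hp hap
  rw [Pm_partner] at hpa
  have hc : c = gf v N hpre hbal a := by
    rw [hpa] at hcp
    rcases Finset.mem_insert.1 hcp with h | h
    · exact absurd h (ne_of_gt (lt_trans hab hbc))
    · exact Finset.mem_singleton.1 h
  have hqb := mem_eq_pair (Pm v N hpre hbal) (Pm_h1 v N hpre hbal) (Pm_h2 v N hpre hbal) hq hbq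
  rw [Pm_partner] at hqb
  have hd : d = gf v N hpre hbal b := by
    rw [hqb] at hdq
    rcases Finset.mem_insert.1 hdq with h | h
    · exact absurd h (ne_of_gt (lt_trans hbc hcd))
    · exact Finset.mem_singleton.1 h
  have hva : v a.val = true := (gf_lt_iff v N hpre hbal a).1 (hc ▸ lt_trans hab hbc)
  have hvb : v b.val = true := (gf_lt_iff v N hpre hbal b).1 (hd ▸ lt_trans hbc hcd)
  have hoa : opener v N a.val := ⟨a.isLt, hva⟩
  have hob : opener v N b.val := ⟨b.isLt, hvb⟩
  have hcval : c.val = qf v N a.val := by rw [hc]; exact gf_open v N hpre hbal hva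
  have hdval : d.val = qf v N b.val := by rw [hd]; exact gf_open v N hpre hbal hvb
  have hclo : closer v N (qf v N a.val) := (qf_spec v N hpre hbal hoa).1
  have hpfq : pf v N (qf v N a.val) = a.val := pf_qf v N hpre hbal hoa
  have h1 : ht v N c.val ≤ ht v N b.val := by
    rw [hcval]
    apply pf_interval v N hpre hclo
    · rw [hpfq]; exact hab
    · rw [← hcval]; exact le_of_lt hbc
  have h2 : ht v N b.val < ht v N c.val := by
    apply qf_interval v N hpre hbal hob hbc
    rw [← hdval]
    exact le_of_lt hcd
  omega

lemma wordm_Pm :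
    wordm (Pm v N hpre hbal) (Pm_h1 v N hpre hbal) (Pm_h2 v N hpre hbal) =
      List.ofFn (fun i : Fin N => if v i.val = true then U else D) := by
  rw [wordm]
  congr 1
  funext i
  rw [Pm_partner]
  by_cases h : v i.val = true
  · rw [if_pos h, if_pos ((gf_lt_iff v N hpre hbal i).2 h)]
  · rw [if_neg h, if_neg (fun hlt => h ((gf_lt_iff v N hpre hbal i).1 hlt))]

end constr
end NCPM

open NCPM in
/-- The number of non-crossing perfect matchings of `{1, …, 2n}` equals the `n`-th
Catalan number. A perfect matching is a family of pairwise-disjoint two-element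
blocks covering everything; it is non-crossing if there are no `a < b < c < d`
with `{a, c}` and `{b, d}` both blocks. -/
theorem card_noncrossing_perfect_matchings (n : ℕ) :
    Nat.card {P : Finset (Finset (Fin (2 * n))) //
      (∀ i : Fin (2 * n), ∃! p, p ∈ P ∧ i ∈ p) ∧
      (∀ p ∈ P, p.card = 2) ∧
      ¬∃ a b c d : Fin (2 * n), a < b ∧ b < c ∧ c < d ∧
        (∃ p ∈ P, a ∈ p ∧ c ∈ p) ∧ (∃ q ∈ P, b ∈ q ∧ d ∈ q)} = catalan n := by
  rw [← DyckWord.card_dyckWord_semilength_eq_catalan n, ← Nat.card_eq_fintype_card]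
  apply Nat.card_eq_of_bijective
    (fun x => ⟨dyckOf x.1 x.2.1 x.2.2.1, semilength_dyckOf x.1 x.2.1 x.2.2.1 n rfl⟩)
  constructor
  · rintro ⟨P, hP1, hP2, hP3⟩ ⟨Q, hQ1, hQ2, hQ3⟩ h
    have hword : wordm P hP1 hP2 = wordm Q hQ1 hQ2 :=
      congrArg (fun w : {p : DyckWord // p.semilength = n} => w.val.toList) h
    exact Subtype.ext (Finset.Subset.antisymm
      (subset_of_word_eq P Q hP1 hP2 hQ1 hQ2 hword hP3 hQ3)
      (subset_of_word_eq Q P hQ1 hQ2 hP1 hP2 hword.symm hQ3 hP3))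
  · rintro ⟨w, hw⟩
    have hNl : w.toList.length = 2 * n := by
      have h2l := w.two_mul_semilength_eq_length
      omega
    set l := w.toList with hldef
    set v : ℕ → Bool := lv l with hvdef
    have hpre : ∀ m, bb v (2 * n) m ≤ aa v (2 * n) m := by
      intro m
      have ha := (count_take l m).1
      have hb := (count_take l m).2
      rw [hNl] at ha hb
      rw [← ha, ← hb]
      exact w.count_D_le_count_U m
    have hbal : aa v (2 * n) (2 * n) = bb v (2 * n) (2 * n) := by
      have ha := (count_full l).1
      have hb := (count_full l).2
      rw [hNl] at ha hb
      rw [← ha, ← hb]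
      exact w.count_U_eq_count_D
    refine ⟨⟨Pm v (2 * n) hpre hbal, Pm_h1 v (2 * n) hpre hbal,
      Pm_h2 v (2 * n) hpre hbal, Pm_h3 v (2 * n) hpre hbal⟩, ?_⟩
    apply Subtype.ext
    apply DyckWord.ext
    show wordm _ _ _ = l
    rw [wordm_Pm]
    apply List.ext_getElem
    · simp [hNl]
    · intro i h1 h2
      have hiN : i < 2 * n := by
        simp only [List.length_ofFn] at h1
        exact h1
      have hil : i < l.length := by omega
      rw [List.getElem_ofFn]
      have hv : v i = decide (l.getD i DyckStep.D = DyckStep.U) := rfl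
      rw [List.getD_eq_getElem?_getD, List.getElem?_eq_getElem hil, Option.getD_some] at hv
      rcases (l[i]).dichotomy with hU | hU
      · rw [hU] at hv ⊢
        rw [if_pos (by simpa using hv)]
      · rw [hU] at hv ⊢
        rw [if_neg (by simp [hv])]
end

section
/- For every even positive integer n, the sum over all non-crossing partitions π of {1,…,n} all of whose blocks have even size, of the product over blocks V ∈ π of (−1)^{|V|/2 − 1} C_{|V|/2 − 1}, equals 1, where C_k is the k-th Catalan number. -/
open scoped Classical

open Finset

namespace NCProof

variable {α : Type*} [LinearOrder α]

def kap (k : ℕ) : ℤ := (-1 : ℤ) ^ (k / 2 - 1) * catalan (k / 2 - 1)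

def IsNCP (s : Finset α) (P : Finset (Finset α)) : Prop :=
  (∀ i ∈ s, ∃! p, p ∈ P ∧ i ∈ p) ∧
  (∀ p ∈ P, p ⊆ s ∧ p.card ≠ 0 ∧ Even p.card) ∧
  ¬∃ a b c d : α, a < b ∧ b < c ∧ c < d ∧
    ∃ p ∈ P, ∃ q ∈ P, p ≠ q ∧ a ∈ p ∧ c ∈ p ∧ b ∈ q ∧ d ∈ q

noncomputable def NCPset (s : Finset α) : Finset (Finset (Finset α)) :=
  s.powerset.powerset.filter (IsNCP s)

lemma mem_NCPset {s : Finset α} {P : Finset (Finset α)} :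
    P ∈ NCPset s ↔ IsNCP s P := by
  simp only [NCPset, mem_filter, mem_powerset, and_iff_right_iff_imp]
  intro h
  intro p hp
  simpa using h.2.1 p hp |>.1

noncomputable def S (s : Finset α) : ℤ := ∑ P ∈ NCPset s, ∏ p ∈ P, kap p.card

lemma IsNCP.cross {s : Finset α} {P : Finset (Finset α)} (h : IsNCP s P)
    {p q : Finset α} {a b c d : α} (hp : p ∈ P) (hq : q ∈ P) (hpq : p ≠ q)
    (h1 : a < b) (h2 : b < c) (h3 : c < d)
    (ha : a ∈ p) (hc : c ∈ p) (hb : b ∈ q) (hd : d ∈ q) : False :=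
  h.2.2 ⟨a, b, c, d, h1, h2, h3, p, hp, q, hq, hpq, ha, hc, hb, hd⟩

noncomputable def blk (P : Finset (Finset α)) (i : α) : Finset α :=
  if h : ∃ p ∈ P, i ∈ p then h.choose else ∅

lemma blk_spec {P : Finset (Finset α)} {i : α} (h : ∃ p ∈ P, i ∈ p) :
    blk P i ∈ P ∧ i ∈ blk P i := by
  rw [blk, dif_pos h]
  exact ⟨h.choose_spec.1, h.choose_spec.2⟩

lemma IsNCP.exists_blk {s : Finset α} {P : Finset (Finset α)} (h : IsNCP s P)
    {i : α} (hi : i ∈ s) : ∃ p ∈ P, i ∈ p := by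
  obtain ⟨p, hp, -⟩ := h.1 i hi
  exact ⟨p, hp.1, hp.2⟩

lemma IsNCP.blk_mem {s : Finset α} {P : Finset (Finset α)} (h : IsNCP s P)
    {i : α} (hi : i ∈ s) : blk P i ∈ P := (blk_spec (h.exists_blk hi)).1

lemma IsNCP.mem_blk {s : Finset α} {P : Finset (Finset α)} (h : IsNCP s P)
    {i : α} (hi : i ∈ s) : i ∈ blk P i := (blk_spec (h.exists_blk hi)).2

lemma IsNCP.eq_blk {s : Finset α} {P : Finset (Finset α)} (h : IsNCP s P)
    {i : α} (hi : i ∈ s) {q : Finset α} (hq : q ∈ P) (hiq : i ∈ q) :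
    q = blk P i := by
  obtain ⟨p, -, hu⟩ := h.1 i hi
  rw [hu q ⟨hq, hiq⟩, hu (blk P i) ⟨h.blk_mem hi, h.mem_blk hi⟩]

lemma IsNCP.eq_of_mem_mem {s : Finset α} {P : Finset (Finset α)} (h : IsNCP s P)
    {p q : Finset α} (hp : p ∈ P) (hq : q ∈ P) {x : α} (hx : x ∈ p) (hx' : x ∈ q) :
    p = q := by
  have hxs : x ∈ s := (h.2.1 p hp).1 hx
  rw [h.eq_blk hxs hp hx, h.eq_blk hxs hq hx']


section Geom
variable {s : Finset α} {a b : α} {P : Finset (Finset α)}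

/-- Separation: in a noncrossing partition, if `a` is the min of `s` and `b` the
second-smallest, with `a, b` in different blocks, every element of `b`'s block is
less than every element (other than `a`) of `a`'s block. -/
lemma sep (h : IsNCP s P) (has : a ∈ s) (hmin : ∀ x ∈ s, a ≤ x)
    (hbs : b ∈ s) (hab : a < b) (hbmin : ∀ x ∈ s, x ≠ a → b ≤ x)
    (hne : blk P a ≠ blk P b) :
    ∀ x ∈ blk P b, ∀ y ∈ blk P a, y ≠ a → x < y := by
  intro x hx y hy hya
  have hB1 := h.blk_mem has
  have hB2 := h.blk_mem hbs
  have haB1 := h.mem_blk has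
  have hbB2 := h.mem_blk hbs
  have hxs : x ∈ s := (h.2.1 _ hB2).1 hx
  have hys : y ∈ s := (h.2.1 _ hB1).1 hy
  have hxy : x ≠ y := fun e => hne (h.eq_of_mem_mem hB1 hB2 hy (e ▸ hx))
  have hay : a < y := lt_of_le_of_ne (hmin y hys) (Ne.symm hya)
  have hxa : x ≠ a := fun e => hne (h.eq_of_mem_mem hB1 hB2 (e.symm ▸ haB1) hx)
  have hby : b < y := lt_of_le_of_ne (hbmin y hys hya)
    (fun e => hne (h.eq_of_mem_mem hB1 hB2 hy (e.symm ▸ hbB2)))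
  by_contra hc
  have hyx : y < x := lt_of_le_of_ne (le_of_not_gt hc) (Ne.symm hxy)
  exact h.cross hB1 hB2 hne hab hby hyx haB1 hy hbB2 hx

def mrg (P : Finset (Finset α)) (p q : Finset α) : Finset (Finset α) :=
  insert (p ∪ q) ((P.erase p).erase q)

lemma mem_mrg {p q r : Finset α} :
    r ∈ mrg P p q ↔ r = p ∪ q ∨ (r ∈ P ∧ r ≠ p ∧ r ≠ q) := by
  simp only [mrg, mem_insert, mem_erase]
  tauto

lemma mrg_isNCP (h : IsNCP s P) (has : a ∈ s) (hmin : ∀ x ∈ s, a ≤ x)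
    (hbs : b ∈ s) (hab : a < b) (hbmin : ∀ x ∈ s, x ≠ a → b ≤ x)
    (hne : blk P a ≠ blk P b) :
    IsNCP s (mrg P (blk P a) (blk P b)) := by
  set B1 := blk P a with hB1def
  set B2 := blk P b with hB2def
  have hB1 := h.blk_mem has
  have hB2 := h.blk_mem hbs
  have haB1 := h.mem_blk has
  have hbB2 := h.mem_blk hbs
  have hdisj : ∀ x : α, x ∈ B1 → x ∈ B2 → False :=
    fun x h1 h2 => hne (h.eq_of_mem_mem hB1 hB2 h1 h2)
  have hsep := sep h has hmin hbs hab hbmin hne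
  refine ⟨?_, ?_, ?_⟩
  · intro i hi
    by_cases hiM : i ∈ B1 ∪ B2
    · refine ⟨B1 ∪ B2, ⟨mem_mrg.2 (Or.inl rfl), hiM⟩, ?_⟩
      rintro r ⟨hr, hir⟩
      rcases mem_mrg.1 hr with rfl | ⟨hrP, hr1, hr2⟩
      · rfl
      · exfalso
        rcases mem_union.1 hiM with h1 | h2
        · exact hr1 (h.eq_of_mem_mem hrP hB1 hir h1)
        · exact hr2 (h.eq_of_mem_mem hrP hB2 hir h2)
    · have hbl := h.blk_mem hi
      have hibl := h.mem_blk hi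
      have h1 : blk P i ≠ B1 := fun e => hiM (mem_union.2 (Or.inl (e ▸ hibl)))
      have h2 : blk P i ≠ B2 := fun e => hiM (mem_union.2 (Or.inr (e ▸ hibl)))
      refine ⟨blk P i, ⟨mem_mrg.2 (Or.inr ⟨hbl, h1, h2⟩), hibl⟩, ?_⟩
      rintro r ⟨hr, hir⟩
      rcases mem_mrg.1 hr with rfl | ⟨hrP, hr1, hr2⟩
      · exact absurd hir hiM
      · exact h.eq_blk hi hrP hir
  · intro p hp
    rcases mem_mrg.1 hp with rfl | ⟨hpP, -, -⟩
    · have hdis : Disjoint B1 B2 := Finset.disjoint_left.2 fun {x} hx hy => (hdisj x hx hy).elim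
      have hcard : (B1 ∪ B2).card = B1.card + B2.card := card_union_of_disjoint hdis
      refine ⟨union_subset (h.2.1 _ hB1).1 (h.2.1 _ hB2).1, ?_, ?_⟩
      · rw [hcard]
        have h1 : B1.card ≠ 0 := (h.2.1 _ hB1).2.1
        omega
      · rw [hcard]
        have h1 : Even B1.card := (h.2.1 _ hB1).2.2
        have h2 : Even B2.card := (h.2.1 _ hB2).2.2
        exact Even.add h1 h2
    · exact h.2.1 p hpP
  · rintro ⟨u, v, w, z, huv, hvw, hwz, p, hp, q, hq, hpq, hu, hw, hv, hz⟩
    have husle : ∀ {r : Finset α}, r ∈ mrg P B1 B2 → ∀ {x : α}, x ∈ r → x ∈ s := by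
      intro r hr x hx
      rcases mem_mrg.1 hr with rfl | ⟨hrP, -, -⟩
      · rcases mem_union.1 hx with h1 | h2
        · exact (h.2.1 _ hB1).1 h1
        · exact (h.2.1 _ hB2).1 h2
      · exact (h.2.1 _ hrP).1 hx
    have hus : u ∈ s := husle hp hu
    have hvs : v ∈ s := husle hq hv
    rcases mem_mrg.1 hp with rfl | ⟨hpP, hp1, hp2⟩ <;>
      rcases mem_mrg.1 hq with hqM | ⟨hqP, hq1, hq2⟩
    · exact hpq (hqM ▸ rfl)
    · -- p = B1 ∪ B2, q ∈ P, q ≠ B1, B2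
      rcases mem_union.1 hu with hu1 | hu2 <;> rcases mem_union.1 hw with hw1 | hw2
      · exact h.cross hB1 hqP (Ne.symm hq1) huv hvw hwz hu1 hw1 hv hz
      · -- u ∈ B1, w ∈ B2 : u must be a
        have hua : u = a := by
          by_contra hua
          exact absurd (hsep w hw2 u hu1 hua) (not_lt.2 (le_of_lt (lt_trans huv hvw)))
        have hvb : b < v := by
          refine lt_of_le_of_ne (hbmin v hvs ?_) ?_
          · intro e; exact absurd (e ▸ huv : u < a) (not_lt.2 (hmin u hus))
          · intro e; exact hq2 (h.eq_of_mem_mem hqP hB2 hv (e.symm ▸ hbB2))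
        exact h.cross hB2 hqP (Ne.symm hq2) hvb hvw hwz hbB2 hw2 hv hz
      · -- u ∈ B2, w ∈ B1
        have hau : a < u := by
          refine lt_of_le_of_ne (hmin u hus) ?_
          intro e; exact hdisj u (e ▸ haB1) hu2
        exact h.cross hB1 hqP (Ne.symm hq1) (lt_trans hau huv) hvw hwz haB1 hw1 hv hz
      · exact h.cross hB2 hqP (Ne.symm hq2) huv hvw hwz hu2 hw2 hv hz
    · -- p ∈ P, q = B1 ∪ B2
      subst hqM
      rcases mem_union.1 hv with hv1 | hv2 <;> rcases mem_union.1 hz with hz1 | hz2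
      · exact h.cross hpP hB1 hp1 huv hvw hwz hu hw hv1 hz1
      · -- v ∈ B1, z ∈ B2
        have hva : v = a := by
          by_contra hva
          exact absurd (hsep z hz2 v hv1 hva) (not_lt.2 (le_of_lt (lt_trans hvw hwz)))
        exact absurd (hva ▸ huv : u < a) (not_lt.2 (hmin u hus))
      · -- v ∈ B2, z ∈ B1
        have hau : a < u := by
          refine lt_of_le_of_ne (hmin u hus) ?_
          intro e; exact hp1 (h.eq_of_mem_mem hpP hB1 hu (e ▸ haB1))
        have hbu : b < u := by
          refine lt_of_le_of_ne (hbmin u hus (ne_of_gt hau)) ?_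
          intro e; exact hp2 (h.eq_of_mem_mem hpP hB2 hu (e ▸ hbB2))
        exact h.cross hB2 hpP (Ne.symm hp2) hbu huv hvw hbB2 hv2 hu hw
      · exact h.cross hpP hB2 hp2 huv hvw hwz hu hw hv2 hz2
    · exact h.cross hpP hqP hpq huv hvw hwz hu hw hv hz

end Geom

section Split
variable {s : Finset α} {a b c : α} {P : Finset (Finset α)} {B : Finset α}

def cutB2 (a c : α) (B : Finset α) : Finset α := B.filter (fun x => a < x ∧ x < c)

lemma cut_main (h : IsNCP s P) (has : a ∈ s) (hmin : ∀ x ∈ s, a ≤ x)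
    (hbs : b ∈ s) (hab : a < b) (hbmin : ∀ x ∈ s, x ≠ a → b ≤ x)
    (hBP : B ∈ P) (haB : a ∈ B) (hbB : b ∈ B) (hc : c ∈ B)
    (ht0 : (cutB2 a c B).card ≠ 0)
    (hte : Even (cutB2 a c B).card) :
    IsNCP s (insert (B \ cutB2 a c B) (insert (cutB2 a c B) (P.erase B))) ∧
    blk (insert (B \ cutB2 a c B) (insert (cutB2 a c B) (P.erase B))) a = B \ cutB2 a c B ∧
    blk (insert (B \ cutB2 a c B) (insert (cutB2 a c B) (P.erase B))) b = cutB2 a c B ∧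
    mrg (insert (B \ cutB2 a c B) (insert (cutB2 a c B) (P.erase B)))
      (B \ cutB2 a c B) (cutB2 a c B) = P := by
  set B2 : Finset α := cutB2 a c B with hB2def
  set B1 : Finset α := B \ B2 with hB1def
  set Q : Finset (Finset α) := insert B1 (insert B2 (P.erase B)) with hQdef
  have hBs : B ⊆ s := (h.2.1 _ hBP).1
  have hmemB2 : ∀ x : α, x ∈ B2 ↔ x ∈ B ∧ a < x ∧ x < c := by
    intro x; simp [hB2def, cutB2]
  have hanotB2 : a ∉ B2 := by
    rw [hmemB2]; rintro ⟨-, h1, -⟩; exact absurd h1 (lt_irrefl a)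
  have haB1 : a ∈ B1 := mem_sdiff.2 ⟨haB, hanotB2⟩
  have hB2B : B2 ⊆ B := filter_subset _ _
  have hB1B : B1 ⊆ B := sdiff_subset
  have hunion : B1 ∪ B2 = B := sdiff_union_of_subset hB2B
  have hdisjB : Disjoint B1 B2 := sdiff_disjoint
  obtain ⟨x0, hx0⟩ : B2.Nonempty := Finset.card_pos.1 (Nat.pos_of_ne_zero ht0)
  have hx0' := (hmemB2 x0).1 hx0
  have hac : a < c := lt_trans hx0'.2.1 hx0'.2.2
  have hcB1 : c ∈ B1 := by
    rw [hB1def, mem_sdiff, hmemB2]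
    exact ⟨hc, fun h' => absurd h'.2.2 (lt_irrefl c)⟩
  have hbB2 : b ∈ B2 := by
    rw [hmemB2]
    refine ⟨hbB, hab, lt_of_le_of_lt ?_ hx0'.2.2⟩
    exact hbmin x0 (hBs hx0'.1) (ne_of_gt hx0'.2.1)
  have hB1mem : ∀ x ∈ B1, x = a ∨ c ≤ x := by
    intro x hx
    rw [hB1def, mem_sdiff, hmemB2] at hx
    have hax : a ≤ x := hmin x (hBs hx.1)
    rcases eq_or_lt_of_le hax with e | hl
    · exact Or.inl e.symm
    · right; by_contra hcx
      exact hx.2 ⟨hx.1, hl, lt_of_not_ge hcx⟩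
  have hB1notP : B1 ∉ P := by
    intro hB1P
    have e : B1 = B := h.eq_of_mem_mem hB1P hBP haB1 haB
    exact Finset.disjoint_left.1 hdisjB (e ▸ hx0'.1 : x0 ∈ B1) hx0
  have hB2notP : B2 ∉ P := by
    intro hB2P
    have e : B2 = B := h.eq_of_mem_mem hB2P hBP hbB2 hbB
    exact hanotB2 (e ▸ haB)
  have hB1neB2 : B1 ≠ B2 := fun e => hanotB2 (e ▸ haB1)
  have hQmem : ∀ r : Finset α, r ∈ Q ↔ r = B1 ∨ r = B2 ∨ (r ∈ P ∧ r ≠ B) := by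
    intro r
    rw [hQdef]
    simp only [mem_insert, mem_erase]
    tauto
  have huniq : ∀ r ∈ Q, ∀ r' ∈ Q, ∀ i : α, i ∈ r → i ∈ r' → r = r' := by
    have key : ∀ r' ∈ Q, ∀ i : α, i ∈ B1 → i ∈ r' → B1 = r' := by
      rintro r' hr' i hi hi'
      rcases (hQmem r').1 hr' with rfl | rfl | ⟨hr'P, hr'B⟩
      · rfl
      · exact absurd hi' (Finset.disjoint_left.1 hdisjB hi)
      · exact absurd (h.eq_of_mem_mem hr'P hBP hi' (hB1B hi)) hr'B
    have key2 : ∀ r' ∈ Q, ∀ i : α, i ∈ B2 → i ∈ r' → B2 = r' := by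
      rintro r' hr' i hi hi'
      rcases (hQmem r').1 hr' with rfl | rfl | ⟨hr'P, hr'B⟩
      · exact absurd hi (Finset.disjoint_left.1 hdisjB hi')
      · rfl
      · exact absurd (h.eq_of_mem_mem hr'P hBP hi' (hB2B hi)) hr'B
    intro r hr r' hr' i hi hi'
    rcases (hQmem r).1 hr with rfl | rfl | ⟨hrP, hrB⟩
    · exact key r' hr' i hi hi'
    · exact key2 r' hr' i hi hi'
    · rcases (hQmem r').1 hr' with rfl | rfl | ⟨hrP', hrB'⟩
      · exact (key r hr i hi' hi).symm
      · exact (key2 r hr i hi' hi).symm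
      · exact h.eq_of_mem_mem hrP hrP' hi hi'
  have hQncp : IsNCP s Q := by
    refine ⟨?_, ?_, ?_⟩
    · intro i hi
      have hex : ∃ r ∈ Q, i ∈ r := by
        by_cases h1 : i ∈ B1
        · exact ⟨B1, (hQmem B1).2 (Or.inl rfl), h1⟩
        by_cases h2 : i ∈ B2
        · exact ⟨B2, (hQmem B2).2 (Or.inr (Or.inl rfl)), h2⟩
        have hbl := h.blk_mem hi
        have hibl := h.mem_blk hi
        have hne : blk P i ≠ B := by
          intro e
          have hiB : i ∈ B := e ▸ hibl
          rcases mem_union.1 (hunion ▸ hiB : i ∈ B1 ∪ B2) with h' | h'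
          · exact h1 h'
          · exact h2 h'
        exact ⟨blk P i, (hQmem _).2 (Or.inr (Or.inr ⟨hbl, hne⟩)), hibl⟩
      obtain ⟨r, hr, hir⟩ := hex
      exact ⟨r, ⟨hr, hir⟩, fun r' hr' => huniq r' hr'.1 r hr i hr'.2 hir⟩
    · intro r hr
      rcases (hQmem r).1 hr with rfl | rfl | ⟨hrP, -⟩
      · refine ⟨hB1B.trans hBs, fun hz => ?_, ?_⟩
        · exact absurd hz (Finset.card_ne_zero_of_mem haB1)
        · rw [hB1def, card_sdiff_of_subset hB2B]
          rw [Nat.even_sub (card_le_card hB2B)]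
          have hBeven : Even B.card := (h.2.1 _ hBP).2.2
          exact ⟨fun _ => hte, fun _ => hBeven⟩
      · exact ⟨hB2B.trans hBs, ht0, hte⟩
      · exact h.2.1 _ hrP
    · rintro ⟨u, v, w, z, huv, hvw, hwz, p, hp, q, hq, hpq, hu, hw, hv, hz⟩
      have hsubB12 : ∀ x ∈ B2, a < x ∧ x < c := fun x hx => ((hmemB2 x).1 hx).2
      rcases (hQmem p).1 hp with rfl | rfl | ⟨hpP, hpB⟩ <;>
        rcases (hQmem q).1 hq with rfl | rfl | ⟨hqP, hqB⟩
      · exact hpq rfl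
      · -- p = B1, q = B2
        have hv' := hsubB12 v hv
        have hz' := hsubB12 z hz
        rcases hB1mem w hw with hwa | hcw
        · have haw : a < w := lt_trans hv'.1 hvw
          rw [hwa] at haw
          exact lt_irrefl a haw
        · exact absurd (lt_trans hwz hz'.2) (not_lt.2 hcw)
      · exact h.cross hBP hqP (Ne.symm hqB) huv hvw hwz (hB1B hu) (hB1B hw) hv hz
      · -- p = B2, q = B1
        have hu' := hsubB12 u hu
        rcases hB1mem v hv with hva | hcv
        · have hua : u < a := hva ▸ huv
          exact absurd hua (not_lt.2 hu'.1.le)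
        · have hw' := hsubB12 w hw
          exact absurd (lt_trans hvw hw'.2) (not_lt.2 hcv)
      · exact hpq rfl
      · exact h.cross hBP hqP (Ne.symm hqB) huv hvw hwz (hB2B hu) (hB2B hw) hv hz
      · exact h.cross hpP hBP hpB huv hvw hwz hu hw (hB1B hv) (hB1B hz)
      · exact h.cross hpP hBP hpB huv hvw hwz hu hw (hB2B hv) (hB2B hz)
      · exact h.cross hpP hqP hpq huv hvw hwz hu hw hv hz
  have hblka : blk Q a = B1 :=
    (hQncp.eq_blk has ((hQmem B1).2 (Or.inl rfl)) haB1).symm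
  have hblkb : blk Q b = B2 :=
    (hQncp.eq_blk hbs ((hQmem B2).2 (Or.inr (Or.inl rfl))) hbB2).symm
  refine ⟨hQncp, hblka, hblkb, ?_⟩
  have e1 : Q.erase B1 = insert B2 (P.erase B) := by
    rw [hQdef]
    refine erase_insert ?_
    simp only [mem_insert, mem_erase]
    rintro (e | ⟨-, hP⟩)
    · exact hB1neB2 e
    · exact hB1notP hP
  have e2 : (Q.erase B1).erase B2 = P.erase B := by
    rw [e1]
    refine erase_insert ?_
    simp only [mem_erase]
    rintro ⟨-, hP⟩
    exact hB2notP hP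
  rw [mrg, e2, hunion, insert_erase hBP]

end Split

lemma kap_two : kap 2 = 1 := by simp [kap]

lemma key_numeric (M : ℕ) (h4 : 4 ≤ M) (he : Even M) :
    kap M + ∑ t ∈ (range (M - 1)).filter (fun t => t ≠ 0 ∧ Even t),
      kap t * kap (M - t) = 0 := by
  obtain ⟨k, hk⟩ := he
  set r : ℕ := k - 2 with hr
  have hM : M = 2 * r + 4 := by omega
  subst hM
  have hsum : ∑ t ∈ (range (2 * r + 4 - 1)).filter (fun t => t ≠ 0 ∧ Even t),
      kap t * kap (2 * r + 4 - t) =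
      ∑ q ∈ range (r + 1), kap (2 * q + 2) * kap (2 * (r - q) + 2) := by
    refine Finset.sum_nbij' (fun t => t / 2 - 1) (fun q => 2 * q + 2) ?_ ?_ ?_ ?_ ?_
    · intro t ht
      simp only [mem_filter, mem_range, Nat.even_iff] at ht
      simp only [mem_range]
      omega
    · intro q hq
      simp only [mem_range] at hq
      simp only [mem_filter, mem_range, Nat.even_iff]
      omega
    · intro t ht
      simp only [mem_filter, mem_range, Nat.even_iff] at ht
      omega
    · intro q hq
      simp only [mem_range] at hq
      omega
    · intro t ht
      simp only [mem_filter, mem_range, Nat.even_iff] at ht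
      congr 2
      · omega
      · omega
  rw [hsum]
  have hterm : ∀ q ∈ range (r + 1),
      kap (2 * q + 2) * kap (2 * (r - q) + 2) =
      (-1 : ℤ) ^ r * (catalan q * catalan (r - q)) := by
    intro q hq
    simp only [mem_range] at hq
    have e1 : (2 * q + 2) / 2 - 1 = q := by omega
    have e2 : (2 * (r - q) + 2) / 2 - 1 = r - q := by omega
    rw [kap, kap, e1, e2]
    have : (-1 : ℤ) ^ q * (-1 : ℤ) ^ (r - q) = (-1 : ℤ) ^ r := by
      rw [← pow_add]
      congr 1
      omega
    ring_nf
    rw [← this]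
    ring
  rw [Finset.sum_congr rfl hterm, ← Finset.mul_sum]
  have hcat : ∑ q ∈ range (r + 1), ((catalan q : ℤ) * catalan (r - q)) =
      (catalan (r + 1) : ℤ) := by
    rw [catalan_succ]
    push_cast
    rw [Fin.sum_univ_eq_sum_range (fun i => (catalan i : ℤ) * (catalan (r - i) : ℤ))]
  rw [hcat]
  have e3 : (2 * r + 4) / 2 - 1 = r + 1 := by omega
  rw [kap, e3, pow_succ]
  ring


section D0
variable {s : Finset α} {a b : α} {P P' : Finset (Finset α)}

lemma D0_erase (h : IsNCP s P) (has : a ∈ s) (hmin : ∀ x ∈ s, a ≤ x)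
    (hbs : b ∈ s) (hab : a < b) (hbmin : ∀ x ∈ s, x ≠ a → b ≤ x)
    (hblk : blk P a = {a, b}) :
    IsNCP ((s.erase a).erase b) (P.erase {a, b}) := by
  have hpair : ({a, b} : Finset α) ∈ P := hblk ▸ h.blk_mem has
  have hbpair : blk P b = {a, b} :=
    (h.eq_blk hbs hpair (by simp)).symm
  refine ⟨?_, ?_, ?_⟩
  · intro i hi
    rw [mem_erase] at hi
    have hib := hi.1
    have hia := (mem_erase.1 hi.2).1
    have his := (mem_erase.1 hi.2).2
    have hibl := h.mem_blk his
    have hne : blk P i ≠ {a, b} := by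
      intro e
      rcases mem_insert.1 (e ▸ hibl) with e' | e'
      · exact hia e'
      · exact hib (mem_singleton.1 e')
    refine ⟨blk P i, ⟨mem_erase.2 ⟨hne, h.blk_mem his⟩, hibl⟩, ?_⟩
    rintro r ⟨hr, hir⟩
    exact h.eq_blk his (mem_of_mem_erase hr) hir
  · intro p hp
    have hpP := mem_of_mem_erase hp
    have hpne := (mem_erase.1 hp).1
    refine ⟨?_, (h.2.1 _ hpP).2.1, (h.2.1 _ hpP).2.2⟩
    intro x hx
    have hxs : x ∈ s := (h.2.1 _ hpP).1 hx
    have hxa : x ≠ a := by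
      rintro rfl
      exact hpne ((h.eq_blk hxs hpP hx).trans hblk)
    have hxb : x ≠ b := by
      rintro rfl
      exact hpne ((h.eq_blk hxs hpP hx).trans hbpair)
    exact mem_erase.2 ⟨hxb, mem_erase.2 ⟨hxa, hxs⟩⟩
  · rintro ⟨u, v, w, z, huv, hvw, hwz, p, hp, q, hq, hpq, hu, hw, hv, hz⟩
    exact h.cross (mem_of_mem_erase hp) (mem_of_mem_erase hq) hpq huv hvw hwz hu hw hv hz

lemma D0_insert (h' : IsNCP ((s.erase a).erase b) P')
    (has : a ∈ s) (hmin : ∀ x ∈ s, a ≤ x)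
    (hbs : b ∈ s) (hab : a < b) (hbmin : ∀ x ∈ s, x ≠ a → b ≤ x) :
    IsNCP s (insert {a, b} P') ∧ blk (insert ({a, b} : Finset α) P') a = {a, b} ∧
      ({a, b} : Finset α) ∉ P' := by
  have habne : a ≠ b := ne_of_lt hab
  have hsub' : ∀ p ∈ P', p ⊆ (s.erase a).erase b := fun p hp => (h'.2.1 _ hp).1
  have hnotab : ∀ p ∈ P', ∀ x ∈ p, x ≠ a ∧ x ≠ b ∧ x ∈ s := by
    intro p hp x hx
    have := hsub' p hp hx
    rw [mem_erase, mem_erase] at this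
    exact ⟨this.2.1, this.1, this.2.2⟩
  have hpairnot : ({a, b} : Finset α) ∉ P' := by
    intro hm
    exact (hnotab _ hm a (by simp)).1 rfl
  have hncp : IsNCP s (insert {a, b} P') := by
    refine ⟨?_, ?_, ?_⟩
    · intro i hi
      by_cases hiab : i = a ∨ i = b
      · refine ⟨{a, b}, ⟨mem_insert_self _ _, by rcases hiab with rfl | rfl <;> simp⟩, ?_⟩
        rintro r ⟨hr, hir⟩
        rcases mem_insert.1 hr with rfl | hrP'
        · rfl
        · exfalso
          rcases hiab with rfl | rfl
          · exact (hnotab _ hrP' i hir).1 rfl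
          · exact (hnotab _ hrP' i hir).2.1 rfl
      · push_neg at hiab
        have hi' : i ∈ (s.erase a).erase b :=
          mem_erase.2 ⟨hiab.2, mem_erase.2 ⟨hiab.1, hi⟩⟩
        refine ⟨blk P' i, ⟨mem_insert_of_mem (h'.blk_mem hi'), h'.mem_blk hi'⟩, ?_⟩
        rintro r ⟨hr, hir⟩
        rcases mem_insert.1 hr with rfl | hrP'
        · exfalso
          rcases mem_insert.1 hir with e | e
          · exact hiab.1 e
          · exact hiab.2 (mem_singleton.1 e)
        · exact h'.eq_blk hi' hrP' hir
    · intro p hp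
      rcases mem_insert.1 hp with rfl | hpP'
      · refine ⟨?_, ?_, ?_⟩
        · intro x hx
          rcases mem_insert.1 hx with rfl | hx'
          · exact has
          · exact (mem_singleton.1 hx') ▸ hbs
        · rw [card_pair habne]; omega
        · rw [card_pair habne]; exact ⟨1, rfl⟩
      · refine ⟨?_, (h'.2.1 _ hpP').2.1, (h'.2.1 _ hpP').2.2⟩
        intro x hx
        exact (hnotab _ hpP' x hx).2.2
    · rintro ⟨u, v, w, z, huv, hvw, hwz, p, hp, q, hq, hpq, hu, hw, hv, hz⟩
      rcases mem_insert.1 hp with rfl | hpP' <;> rcases mem_insert.1 hq with hq' | hqP'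
      · exact hpq hq'.symm
      · -- p = {a,b}, q ∈ P'
        have hub : u = a ∨ u = b := by
          rcases mem_insert.1 hu with e | e
          · exact Or.inl e
          · exact Or.inr (mem_singleton.1 e)
        have hwb : w = a ∨ w = b := by
          rcases mem_insert.1 hw with e | e
          · exact Or.inl e
          · exact Or.inr (mem_singleton.1 e)
        have huw : u < w := lt_trans huv hvw
        have hkey : w = b := by
          rcases hub with e | e <;> rcases hwb with e' | e'
          · rw [e, e'] at huw; exact absurd huw (lt_irrefl a)
          · exact e'
          · rw [e, e'] at huw; exact absurd huw (not_lt.2 hab.le)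
          · exact e'
        have hv' := hnotab _ hqP' v hv
        have hbv : b ≤ v := hbmin v hv'.2.2 hv'.1
        rw [hkey] at hvw
        exact absurd hvw (not_lt.2 hbv)
      · -- p ∈ P', q = {a,b}
        subst hq'
        have hva : v = a ∨ v = b := by
          rcases mem_insert.1 hv with e | e
          · exact Or.inl e
          · exact Or.inr (mem_singleton.1 e)
        have hu' := hnotab _ hpP' u hu
        have hau : a ≤ u := hmin u hu'.2.2
        rcases hva with e | e
        · rw [e] at huv
          exact absurd huv (not_lt.2 hau)
        · have hbu : b ≤ u := hbmin u hu'.2.2 hu'.1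
          rw [e] at huv
          exact absurd huv (not_lt.2 hbu)
      · exact h'.cross hpP' hqP' hpq huv hvw hwz hu hw hv hz
  refine ⟨hncp, ?_, hpairnot⟩
  exact (hncp.eq_blk has (mem_insert_self _ _) (by simp)).symm

end D0

section Fiber
variable {s : Finset α} {a b : α}

lemma a_not_cut {c : α} {B : Finset α} : a ∉ cutB2 a c B := by
  simp [cutB2]

lemma fiber_sum (has : a ∈ s) (hmin : ∀ x ∈ s, a ≤ x) (hbs : b ∈ s) (hab : a < b)
    (hbmin : ∀ x ∈ s, x ≠ a → b ≤ x) {Ph : Finset (Finset α)} (h : IsNCP s Ph)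
    (hbB : b ∈ blk Ph a) (hne0 : blk Ph a ≠ {a, b}) :
    (∏ p ∈ Ph, kap p.card) +
      ∑ P ∈ Finset.filter (fun P => mrg P (blk P a) (blk P b) = Ph)
        ((NCPset s).filter (fun P => blk P a ≠ blk P b)),
        ∏ p ∈ P, kap p.card = 0 := by
  set B : Finset α := blk Ph a with hBdef
  have hBP : B ∈ Ph := h.blk_mem has
  have haB : a ∈ B := h.mem_blk has
  have hBs : B ⊆ s := (h.2.1 _ hBP).1
  have hBcard0 : B.card ≠ 0 := (h.2.1 _ hBP).2.1
  have hBeven : Even B.card := (h.2.1 _ hBP).2.2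
  have habne : a ≠ b := ne_of_lt hab
  have hB4 : 4 ≤ B.card := by
    have hsub : ({a, b} : Finset α) ⊆ B := by
      intro x hx
      rcases mem_insert.1 hx with rfl | hx'
      · exact haB
      · exact (mem_singleton.1 hx') ▸ hbB
    have hne2 : B.card ≠ 2 := by
      intro e
      exact hne0 (Finset.eq_of_subset_of_card_le hsub (by rw [e, card_pair habne])).symm
    rw [Nat.even_iff] at hBeven
    omega
  have hBeven : Even B.card := (h.2.1 _ hBP).2.2
  set validC : Finset α :=
    B.filter (fun c => (cutB2 a c B).card ≠ 0 ∧ Even (cutB2 a c B).card) with hvaliddef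
  set R : ℤ := ∏ p ∈ Ph.erase B, kap p.card with hRdef
  set Q : α → Finset (Finset α) :=
    fun c => insert (B \ cutB2 a c B) (insert (cutB2 a c B) (Ph.erase B)) with hQdef
  have hacValid : ∀ c ∈ validC, a < c := by
    intro c hc
    obtain ⟨-, ht0, -⟩ := mem_filter.1 hc
    obtain ⟨x0, hx0⟩ := Finset.card_pos.1 (Nat.pos_of_ne_zero ht0)
    simp only [cutB2, mem_filter] at hx0
    exact lt_trans hx0.2.1 hx0.2.2
  have hvalid_sub : validC ⊆ B.erase a := by
    intro c hc
    exact mem_erase.2 ⟨ne_of_gt (hacValid c hc), (mem_filter.1 hc).1⟩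
  have hmono : ∀ c1 ∈ B.erase a, ∀ c2 ∈ B.erase a, c1 < c2 →
      (cutB2 a c1 B).card < (cutB2 a c2 B).card := by
    intro c1 h1 c2 h2 h12
    have hac1 : a < c1 :=
      lt_of_le_of_ne (hmin c1 (hBs (mem_of_mem_erase h1))) (Ne.symm (mem_erase.1 h1).1)
    have hsub : cutB2 a c1 B ⊆ cutB2 a c2 B := by
      intro x hx
      simp only [cutB2, mem_filter] at hx ⊢
      exact ⟨hx.1, hx.2.1, lt_trans hx.2.2 h12⟩
    refine Finset.card_lt_card ((Finset.ssubset_iff_of_subset hsub).2 ⟨c1, ?_, ?_⟩)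
    · simp only [cutB2, mem_filter]
      exact ⟨mem_of_mem_erase h1, hac1, h12⟩
    · simp only [cutB2, mem_filter]
      rintro ⟨-, -, hlt⟩
      exact lt_irrefl c1 hlt
  have htle : ∀ c ∈ B.erase a, (cutB2 a c B).card ∈ range (B.card - 1) := by
    intro c hc
    have hsub : cutB2 a c B ⊆ (B.erase a).erase c := by
      intro x hx
      simp only [cutB2, mem_filter] at hx
      exact mem_erase.2 ⟨ne_of_lt hx.2.2, mem_erase.2 ⟨ne_of_gt hx.2.1, hx.1⟩⟩
    have hcard : ((B.erase a).erase c).card = B.card - 2 := by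
      rw [card_erase_of_mem hc, card_erase_of_mem haB]
      omega
    have := card_le_card hsub
    rw [hcard] at this
    rw [mem_range]
    omega
  -- Step A: fiber sum = sum over valid cuts
  have hstepA :
      ∑ P ∈ Finset.filter (fun P => mrg P (blk P a) (blk P b) = Ph)
        ((NCPset s).filter (fun P => blk P a ≠ blk P b)), ∏ p ∈ P, kap p.card
      = ∑ c ∈ validC, ∏ p ∈ Q c, kap p.card := by
    refine (Finset.sum_bij (fun c _ => Q c) ?_ ?_ ?_ ?_).symm
    · -- maps into fiber
      intro c hc
      obtain ⟨hcB, ht0, hte⟩ := mem_filter.1 hc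
      obtain ⟨hQncp, hqa, hqb, hqm⟩ :=
        cut_main h has hmin hbs hab hbmin hBP haB hbB hcB ht0 hte
      have hQne : B \ cutB2 a c B ≠ cutB2 a c B := by
        intro e
        exact a_not_cut (e ▸ mem_sdiff.2 ⟨haB, a_not_cut⟩)
      refine mem_filter.2 ⟨mem_filter.2 ⟨mem_NCPset.2 hQncp, ?_⟩, ?_⟩
      · rw [hqa, hqb]; exact hQne
      · rw [hqa, hqb]; exact hqm
    · -- injective
      intro c1 hc1 c2 hc2 he
      obtain ⟨hc1B, ht01, hte1⟩ := mem_filter.1 hc1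
      obtain ⟨hc2B, ht02, hte2⟩ := mem_filter.1 hc2
      have e1 := (cut_main h has hmin hbs hab hbmin hBP haB hbB hc1B ht01 hte1).2.1
      have e2 := (cut_main h has hmin hbs hab hbmin hBP haB hbB hc2B ht02 hte2).2.1
      have hT : B \ cutB2 a c1 B = B \ cutB2 a c2 B := by
        rw [← e1, ← e2]
        exact congrArg (fun X => blk X a) he
      have hlb : ∀ c, a < c → ∀ x, x ∈ B \ cutB2 a c B → x ≠ a → c ≤ x := by
        intro c hac x hx hxa
        rw [mem_sdiff] at hx
        have hax : a < x := lt_of_le_of_ne (hmin x (hBs hx.1)) (Ne.symm hxa)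
        by_contra hcx
        exact hx.2 (by simp only [cutB2, mem_filter]; exact ⟨hx.1, hax, lt_of_not_ge hcx⟩)
      have hself : ∀ c ∈ validC, c ∈ B \ cutB2 a c B := by
        intro c hc
        refine mem_sdiff.2 ⟨(mem_filter.1 hc).1, ?_⟩
        simp only [cutB2, mem_filter]
        rintro ⟨-, -, hlt⟩
        exact lt_irrefl c hlt
      have h12 : c1 ≤ c2 := hlb c1 (hacValid c1 hc1) c2 (hT ▸ hself c2 hc2)
        (ne_of_gt (hacValid c2 hc2))
      have h21 : c2 ≤ c1 := hlb c2 (hacValid c2 hc2) c1 (hT.symm ▸ hself c1 hc1)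
        (ne_of_gt (hacValid c1 hc1))
      exact le_antisymm h12 h21
    · -- surjective
      intro P hPf
      obtain ⟨hPD2, hμ⟩ := mem_filter.1 hPf
      obtain ⟨hPA, hc2⟩ := mem_filter.1 hPD2
      have hP : IsNCP s P := mem_NCPset.1 hPA
      set B1 : Finset α := blk P a with hB1def
      set B2 : Finset α := blk P b with hB2def
      have hB1P : B1 ∈ P := hP.blk_mem has
      have haB1 : a ∈ B1 := hP.mem_blk has
      have hB2P : B2 ∈ P := hP.blk_mem hbs
      have hbB2 : b ∈ B2 := hP.mem_blk hbs
      have hBeq : B1 ∪ B2 = B := by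
        have hM : B1 ∪ B2 ∈ Ph := by
          rw [← hμ]; exact mem_insert_self _ _
        exact h.eq_blk has hM (mem_union_left _ haB1)
      have hB1s : B1 ⊆ s := (hP.2.1 _ hB1P).1
      have hB2s : B2 ⊆ s := (hP.2.1 _ hB2P).1
      have hB1e : (B1.erase a).Nonempty := by
        rw [← Finset.card_pos, card_erase_of_mem haB1]
        have h0 : B1.card ≠ 0 := (hP.2.1 _ hB1P).2.1
        have he : Even B1.card := (hP.2.1 _ hB1P).2.2
        rw [Nat.even_iff] at he
        omega
      set c : α := (B1.erase a).min' hB1e with hcdef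
      have hcmem : c ∈ B1.erase a := Finset.min'_mem _ _
      have hcB1 : c ∈ B1 := mem_of_mem_erase hcmem
      have hcne : c ≠ a := (mem_erase.1 hcmem).1
      have hac : a < c := lt_of_le_of_ne (hmin c (hB1s hcB1)) (Ne.symm hcne)
      have hsep := sep hP has hmin hbs hab hbmin hc2
      have R1 : cutB2 a c B = B2 := by
        ext x
        simp only [cutB2, mem_filter]
        constructor
        · rintro ⟨hxB, hax, hxc⟩
          rcases mem_union.1 (hBeq ▸ hxB : x ∈ B1 ∪ B2) with h1 | h2
          · exfalso
            have : c ≤ x := Finset.min'_le _ _ (mem_erase.2 ⟨ne_of_gt hax, h1⟩)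
            exact absurd hxc (not_lt.2 this)
          · exact h2
        · intro hx
          refine ⟨hBeq ▸ mem_union_right _ hx, ?_, hsep x hx c hcB1 hcne⟩
          refine lt_of_le_of_ne (hmin x (hB2s hx)) ?_
          intro e
          exact hc2 (hP.eq_of_mem_mem hB1P hB2P (e ▸ haB1) hx)
      have hdisj12 : ∀ x, x ∈ B1 → x ∈ B2 → False :=
        fun x h1 h2 => hc2 (hP.eq_of_mem_mem hB1P hB2P h1 h2)
      have R2 : B \ cutB2 a c B = B1 := by
        rw [R1]
        ext x
        rw [mem_sdiff, ← hBeq, mem_union]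
        constructor
        · rintro ⟨h1 | h2, hn⟩
          · exact h1
          · exact absurd h2 hn
        · intro hx
          exact ⟨Or.inl hx, fun h2 => hdisj12 x hx h2⟩
      have hcval : c ∈ validC := by
        refine mem_filter.2 ⟨hBeq ▸ mem_union_left _ hcB1, ?_, ?_⟩
        · rw [R1]; exact Finset.card_ne_zero_of_mem hbB2
        · rw [R1]; exact (hP.2.1 _ hB2P).2.2
      refine ⟨c, hcval, ?_⟩
      have hXeq : Ph.erase B = (P.erase B1).erase B2 := by
        rw [← hμ, mrg, ← hBeq]
        refine erase_insert ?_
        intro hmem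
        have hMP : B1 ∪ B2 ∈ P := mem_of_mem_erase (mem_of_mem_erase hmem)
        have : B1 ∪ B2 = B1 := hP.eq_of_mem_mem hMP hB1P (mem_union_left _ haB1) haB1
        exact (mem_erase.1 (mem_of_mem_erase hmem)).1 this
      show Q c = P
      rw [hQdef]
      simp only
      rw [R2, R1, hXeq]
      have hstep : insert B2 ((P.erase B1).erase B2) = P.erase B1 :=
        insert_erase (mem_erase.2 ⟨fun e => hc2 e.symm, hB2P⟩)
      rw [hstep, insert_erase hB1P]
    · intro c hc
      rfl
  -- Step B: product over Q c
  have hprod : ∀ c ∈ validC, ∏ p ∈ Q c, kap p.card =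
      kap (cutB2 a c B).card * kap (B.card - (cutB2 a c B).card) * R := by
    intro c hc
    obtain ⟨hcB, ht0, hte⟩ := mem_filter.1 hc
    obtain ⟨x0, hx0⟩ := Finset.card_pos.1 (Nat.pos_of_ne_zero ht0)
    have hx0B : x0 ∈ B := (Finset.filter_subset _ _) hx0
    have hni2 : cutB2 a c B ∉ Ph.erase B := by
      intro hmem
      have hcutPh : cutB2 a c B ∈ Ph := mem_of_mem_erase hmem
      have e : cutB2 a c B = B := h.eq_of_mem_mem hcutPh hBP hx0 hx0B
      have haC : a ∈ cutB2 a c B := by rw [e]; exact haB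
      exact a_not_cut haC
    have hni1 : B \ cutB2 a c B ∉ insert (cutB2 a c B) (Ph.erase B) := by
      intro hmem
      rcases mem_insert.1 hmem with e | hmem'
      · exact a_not_cut (e ▸ mem_sdiff.2 ⟨haB, a_not_cut⟩)
      · have hPh : B \ cutB2 a c B ∈ Ph := mem_of_mem_erase hmem'
        have e : B \ cutB2 a c B = B :=
          h.eq_of_mem_mem hPh hBP (mem_sdiff.2 ⟨haB, a_not_cut⟩) haB
        have : x0 ∈ B \ cutB2 a c B := e.symm ▸ hx0B
        exact (mem_sdiff.1 this).2 hx0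
    rw [hQdef]
    simp only
    rw [prod_insert hni1, prod_insert hni2,
      card_sdiff_of_subset (show cutB2 a c B ⊆ B from Finset.filter_subset _ _), ← hRdef]
    ring
  rw [hstepA, Finset.sum_congr rfl hprod]
  -- Step C: reindex to cardinalities
  have hstepC : ∑ c ∈ validC,
      kap (cutB2 a c B).card * kap (B.card - (cutB2 a c B).card) * R =
      (∑ t ∈ (range (B.card - 1)).filter (fun t => t ≠ 0 ∧ Even t),
        kap t * kap (B.card - t)) * R := by
    rw [Finset.sum_mul]
    refine Finset.sum_bij (fun c _ => (cutB2 a c B).card) ?_ ?_ ?_ ?_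
    · intro c hc
      obtain ⟨hcB, ht0, hte⟩ := mem_filter.1 hc
      exact mem_filter.2 ⟨htle c (hvalid_sub hc), ht0, hte⟩
    · intro c1 hc1 c2 hc2 he
      rcases lt_trichotomy c1 c2 with hlt | heq | hlt
      · exact absurd he (ne_of_lt (hmono c1 (hvalid_sub hc1) c2 (hvalid_sub hc2) hlt))
      · exact heq
      · exact absurd he.symm (ne_of_lt (hmono c2 (hvalid_sub hc2) c1 (hvalid_sub hc1) hlt))
    · intro t ht
      have himg : (B.erase a).image (fun c => (cutB2 a c B).card) = range (B.card - 1) := by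
        refine Finset.eq_of_subset_of_card_le ?_ ?_
        · intro t' ht'
          obtain ⟨c, hc, rfl⟩ := Finset.mem_image.1 ht'
          exact htle c hc
        · rw [Finset.card_image_of_injOn, card_erase_of_mem haB, Finset.card_range]
          intro c1 hc1 c2 hc2 he
          rcases lt_trichotomy c1 c2 with hlt | heq | hlt
          · exact absurd he (ne_of_lt (hmono c1 hc1 c2 hc2 hlt))
          · exact heq
          · exact absurd he.symm (ne_of_lt (hmono c2 hc2 c1 hc1 hlt))
      have : t ∈ (B.erase a).image (fun c => (cutB2 a c B).card) := by
        rw [himg]; exact mem_of_mem_filter t ht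
      obtain ⟨c, hc, rfl⟩ := Finset.mem_image.1 this
      obtain ⟨-, ht0, hte⟩ := mem_filter.1 ht
      exact ⟨c, mem_filter.2 ⟨mem_of_mem_erase hc, ht0, hte⟩, rfl⟩
    · intro c hc
      rfl
  rw [hstepC]
  have hw : ∏ p ∈ Ph, kap p.card = kap B.card * R :=
    (Finset.mul_prod_erase Ph _ hBP).symm
  rw [hw]
  have hkey := key_numeric B.card hB4 hBeven
  calc kap B.card * R +
      (∑ t ∈ (range (B.card - 1)).filter (fun t => t ≠ 0 ∧ Even t),
        kap t * kap (B.card - t)) * R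
      = (kap B.card + ∑ t ∈ (range (B.card - 1)).filter (fun t => t ≠ 0 ∧ Even t),
          kap t * kap (B.card - t)) * R := by ring
    _ = 0 * R := by rw [hkey]
    _ = 0 := zero_mul R

end Fiber

lemma NCPset_empty : NCPset (∅ : Finset α) = {∅} := by
  ext P
  rw [mem_NCPset, mem_singleton]
  constructor
  · intro h
    rw [Finset.eq_empty_iff_forall_notMem]
    intro p hp
    have h1 := (h.2.1 p hp).1
    have h2 := (h.2.1 p hp).2.1
    rw [Finset.subset_empty] at h1
    rw [h1] at h2
    exact h2 rfl
  · rintro rfl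
    refine ⟨by simp, by simp, ?_⟩
    rintro ⟨u, v, w, z, -, -, -, p, hp, -⟩
    exact absurd hp (notMem_empty p)

lemma S_eq_one (N : ℕ) : ∀ s : Finset α, s.card = N → Even N → S s = 1 := by
  induction N using Nat.strong_induction_on with
  | _ N ih =>
    intro s hcard hev
    rcases Finset.eq_empty_or_nonempty s with rfl | hne
    · rw [S, NCPset_empty, sum_singleton, prod_empty]
    · -- setup
      have hNne : N ≠ 0 := by
        rw [← hcard]
        exact Finset.card_ne_zero_of_mem hne.choose_spec
      have hN2 : 2 ≤ N := by
        rw [Nat.even_iff] at hev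
        omega
      set a : α := s.min' hne with hadef
      have has : a ∈ s := s.min'_mem hne
      have hmin : ∀ x ∈ s, a ≤ x := fun x hx => s.min'_le x hx
      have hbe : (s.erase a).Nonempty := by
        rw [← Finset.card_pos, card_erase_of_mem has, hcard]
        omega
      set b : α := (s.erase a).min' hbe with hbdef
      have hbea : b ∈ s.erase a := (s.erase a).min'_mem hbe
      have hbs : b ∈ s := mem_of_mem_erase hbea
      have hab : a < b := lt_of_le_of_ne (hmin b hbs) (Ne.symm (mem_erase.1 hbea).1)
      have habne : a ≠ b := ne_of_lt hab
      have hbmin : ∀ x ∈ s, x ≠ a → b ≤ x := fun x hx hxa =>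
        (s.erase a).min'_le x (mem_erase.2 ⟨hxa, hx⟩)
      -- sum splitting
      set w : Finset (Finset α) → ℤ := fun P => ∏ p ∈ P, kap p.card with hwdef
      set A : Finset (Finset (Finset α)) := NCPset s with hAdef
      set cnd2 : Finset (Finset α) → Prop := fun P => blk P a ≠ blk P b with hcnd2
      set D2 : Finset (Finset (Finset α)) := A.filter cnd2 with hD2def
      set ND : Finset (Finset (Finset α)) := A.filter (fun P => ¬ cnd2 P) with hNDdef
      set cnd0 : Finset (Finset α) → Prop := fun P => blk P a = {a, b} with hcnd0
      set D0 : Finset (Finset (Finset α)) := ND.filter cnd0 with hD0def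
      set D1 : Finset (Finset (Finset α)) := ND.filter (fun P => ¬ cnd0 P) with hD1def
      have hsplit1 : ∑ P ∈ D2, w P + ∑ P ∈ ND, w P = ∑ P ∈ A, w P :=
        Finset.sum_filter_add_sum_filter_not A cnd2 w
      have hsplit2 : ∑ P ∈ D0, w P + ∑ P ∈ D1, w P = ∑ P ∈ ND, w P :=
        Finset.sum_filter_add_sum_filter_not ND cnd0 w
      -- facts about D1 members
      have hD1mem : ∀ Ph ∈ D1, IsNCP s Ph ∧ b ∈ blk Ph a ∧ blk Ph a ≠ {a, b} := by
        intro Ph hPh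
        obtain ⟨hPhND, hq⟩ := mem_filter.1 hPh
        obtain ⟨hPhA, hnn⟩ := mem_filter.1 hPhND
        have hncp : IsNCP s Ph := mem_NCPset.1 hPhA
        rw [hcnd2] at hnn
        simp only [not_not] at hnn
        refine ⟨hncp, ?_, hq⟩
        rw [hnn]
        exact hncp.mem_blk hbs
      -- D0 sum
      have hD0sum : ∑ P ∈ D0, w P = S ((s.erase a).erase b) := by
        rw [S]
        refine Finset.sum_nbij' (fun P => P.erase {a, b}) (fun P' => insert {a, b} P')
          ?_ ?_ ?_ ?_ ?_
        · intro P hP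
          obtain ⟨hPND, hblk⟩ := mem_filter.1 hP
          obtain ⟨hPA, -⟩ := mem_filter.1 hPND
          exact mem_NCPset.2
            (D0_erase (mem_NCPset.1 hPA) has hmin hbs hab hbmin hblk)
        · intro P' hP'
          obtain ⟨hncp, hblka, hnotin⟩ :=
            D0_insert (mem_NCPset.1 hP') has hmin hbs hab hbmin
          have hblkb : blk (insert ({a, b} : Finset α) P') b = {a, b} :=
            (hncp.eq_blk hbs (mem_insert_self _ _) (by simp)).symm
          refine mem_filter.2 ⟨mem_filter.2 ⟨mem_NCPset.2 hncp, ?_⟩, hblka⟩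
          rw [hcnd2]
          simp only [not_not]
          rw [hblka, hblkb]
        · intro P hP
          obtain ⟨hPND, hblk⟩ := mem_filter.1 hP
          obtain ⟨hPA, -⟩ := mem_filter.1 hPND
          have hncp := mem_NCPset.1 hPA
          have hpair : ({a, b} : Finset α) ∈ P := by
            rw [← (show blk P a = {a,b} from hblk)]
            exact hncp.blk_mem has
          exact insert_erase hpair
        · intro P' hP'
          exact erase_insert (D0_insert (mem_NCPset.1 hP') has hmin hbs hab hbmin).2.2
        · intro P hP
          obtain ⟨hPND, hblk⟩ := mem_filter.1 hP
          obtain ⟨hPA, -⟩ := mem_filter.1 hPND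
          have hncp := mem_NCPset.1 hPA
          have hpair : ({a, b} : Finset α) ∈ P := by
            rw [← (show blk P a = {a,b} from hblk)]
            exact hncp.blk_mem has
          show ∏ p ∈ P, kap p.card = ∏ p ∈ P.erase {a, b}, kap p.card
          rw [← Finset.mul_prod_erase P (fun p => kap p.card) hpair]
          simp [card_pair habne, kap_two]
      have hIH : S ((s.erase a).erase b) = 1 := by
        have hcard'' : ((s.erase a).erase b).card = N - 2 := by
          rw [card_erase_of_mem hbea, card_erase_of_mem has, hcard]
          omega
        refine ih (N - 2) (by omega) _ hcard'' ?_
        rw [Nat.even_iff] at hev ⊢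
        omega
      -- fiberwise for D2
      have hmaps : ∀ P ∈ D2, mrg P (blk P a) (blk P b) ∈ D1 := by
        intro P hP
        obtain ⟨hPA, hc2⟩ := mem_filter.1 hP
        rw [hcnd2] at hc2
        have hP' : IsNCP s P := mem_NCPset.1 hPA
        have hm := mrg_isNCP hP' has hmin hbs hab hbmin hc2
        have hMmem : blk P a ∪ blk P b ∈ mrg P (blk P a) (blk P b) := mem_insert_self _ _
        have hMa : blk (mrg P (blk P a) (blk P b)) a = blk P a ∪ blk P b :=
          (hm.eq_blk has hMmem (mem_union_left _ (hP'.mem_blk has))).symm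
        have hMb : blk (mrg P (blk P a) (blk P b)) b = blk P a ∪ blk P b :=
          (hm.eq_blk hbs hMmem (mem_union_right _ (hP'.mem_blk hbs))).symm
        have hdisj : Disjoint (blk P a) (blk P b) :=
          Finset.disjoint_left.2 fun {x} hx hy =>
            hc2 (hP'.eq_of_mem_mem (hP'.blk_mem has) (hP'.blk_mem hbs) hx hy)
        have hcard4 : 4 ≤ (blk P a ∪ blk P b).card := by
          rw [card_union_of_disjoint hdisj]
          have h1 := (hP'.2.1 _ (hP'.blk_mem has)).2.1
          have h2 := (hP'.2.1 _ (hP'.blk_mem hbs)).2.1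
          have h3 := (hP'.2.1 _ (hP'.blk_mem has)).2.2
          have h4 := (hP'.2.1 _ (hP'.blk_mem hbs)).2.2
          rw [Nat.even_iff] at h3 h4
          omega
        refine mem_filter.2 ⟨mem_filter.2 ⟨mem_NCPset.2 hm, ?_⟩, ?_⟩
        · rw [hcnd2]
          simp only [not_not]
          rw [hMa, hMb]
        · rw [hcnd0]
          simp only
          rw [hMa]
          intro e
          have := congrArg Finset.card e
          rw [card_pair habne] at this
          omega
      have hfib : ∑ Ph ∈ D1, ∑ P ∈ D2.filter
          (fun P => mrg P (blk P a) (blk P b) = Ph), w P = ∑ P ∈ D2, w P :=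
        Finset.sum_fiberwise_of_maps_to hmaps w
      have hzero : ∑ P ∈ D1, w P + ∑ P ∈ D2, w P = 0 := by
        rw [← hfib, ← Finset.sum_add_distrib]
        refine Finset.sum_eq_zero ?_
        intro Ph hPh
        obtain ⟨hncp, hbB, hne0⟩ := hD1mem Ph hPh
        have := fiber_sum has hmin hbs hab hbmin hncp hbB hne0
        rw [hwdef]
        simp only
        convert this using 2
      have hfinal : ∑ P ∈ A, w P = 1 := by
        have : ∑ P ∈ D0, w P = 1 := by rw [hD0sum, hIH]
        omega
      rw [S, ← hAdef, ← hwdef]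
      exact hfinal

end NCProof

open Finset in
/-- For every even positive integer `n`, the sum over all non-crossing partitions
`π` of `{1, …, n}` all of whose blocks have even size, of the product over blocks
`V ∈ π` of `(-1)^{|V|/2 - 1} C_{|V|/2 - 1}`, equals `1`, where `C_k` is the `k`-th
Catalan number. -/
theorem sum_noncrossing_even_partitions_eq_one (n : ℕ) (hn : 0 < n) (hev : Even n) :
    ∑ P ∈ (Finset.univ : Finset (Finset (Finset (Fin n)))).filter
        (fun P =>
          (∀ i : Fin n, ∃! p, p ∈ P ∧ i ∈ p) ∧
          (∀ p ∈ P, p.card ≠ 0 ∧ Even p.card) ∧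
          ¬∃ a b c d : Fin n, a < b ∧ b < c ∧ c < d ∧
            ∃ p ∈ P, ∃ q ∈ P, p ≠ q ∧ a ∈ p ∧ c ∈ p ∧ b ∈ q ∧ d ∈ q),
      ∏ p ∈ P, ((-1 : ℤ) ^ (p.card / 2 - 1) * catalan (p.card / 2 - 1)) = 1 := by
  have hS := NCProof.S_eq_one (α := Fin n) n Finset.univ (by simp) hev
  rw [NCProof.S] at hS
  have hset : NCProof.NCPset (Finset.univ : Finset (Fin n)) =
      (Finset.univ : Finset (Finset (Finset (Fin n)))).filter
        (fun P =>
          (∀ i : Fin n, ∃! p, p ∈ P ∧ i ∈ p) ∧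
          (∀ p ∈ P, p.card ≠ 0 ∧ Even p.card) ∧
          ¬∃ a b c d : Fin n, a < b ∧ b < c ∧ c < d ∧
            ∃ p ∈ P, ∃ q ∈ P, p ≠ q ∧ a ∈ p ∧ c ∈ p ∧ b ∈ q ∧ d ∈ q) := by
    rw [NCProof.NCPset, Finset.powerset_univ, Finset.powerset_univ]
    apply Finset.filter_congr
    intro P _
    constructor
    · intro h
      exact ⟨fun i => h.1 i (mem_univ i),
        fun p hp => ⟨(h.2.1 p hp).2.1, (h.2.1 p hp).2.2⟩, h.2.2⟩
    · intro h
      exact ⟨fun i _ => h.1 i,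
        fun p hp => ⟨Finset.subset_univ p, (h.2.1 p hp).1, (h.2.1 p hp).2⟩, h.2.2⟩
  rw [hset] at hS
  simp only [NCProof.kap] at hS
  convert hS using 2
end
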